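/- arXiv:2411.12351 — 8 statements merged into one kernel-verified Lean document; each statement's English description precedes it below -/
import Mathlib

section
/- Let P be a finite set of n points on the real line such that all pairwise distances between distinct pairs of points of P are distinct. Then P admits a multipacking of size at least ⌊n/3⌋; that is, the multipacking number MP(P) satisfies MP(P) ≥ ⌊n/3⌋. -/
open scoped Classical

/-- All pairwise distances between distinct pairs of points of `P` are distinct. -/
def DistinctDistances {α : Type*} [MetricSpace α] (P : Finset α) : Prop :=
  ∀ a ∈ P, ∀ b ∈ P, ∀ c ∈ P, ∀ d ∈ P, a ≠ b → c ≠ d →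
    ¬((a = c ∧ b = d) ∨ (a = d ∧ b = c)) → dist a b ≠ dist c d

/-- `N` is the closed neighborhood `N_s[v]`: `v` together with the `s` points of `P`
nearest to `v`. -/
def IsNbhd {α : Type*} [MetricSpace α] (P : Finset α) (v : α) (s : ℕ) (N : Finset α) : Prop :=
  N ⊆ P ∧ v ∈ N ∧ N.card = s + 1 ∧ ∀ a ∈ N, ∀ b ∈ P, b ∉ N → dist v a < dist v b

/-- `M` is an `r`-multipacking of `P`: `M ⊆ P` and for every `v ∈ P` and every
`1 ≤ s ≤ r`, `|N_s[v] ∩ M| ≤ (s+1)/2`. -/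
def IsMultipackingR {α : Type*} [MetricSpace α] (P : Finset α) (r : ℕ) (M : Finset α) : Prop :=
  M ⊆ P ∧ ∀ v ∈ P, ∀ s : ℕ, 1 ≤ s → s ≤ r → ∀ N : Finset α, IsNbhd P v s N →
    2 * (N ∩ M).card ≤ s + 1

/-- `M` is a multipacking of `P`, i.e. an `(n-1)`-multipacking where `n = |P|`. -/
def IsMultipacking {α : Type*} [MetricSpace α] (P : Finset α) (M : Finset α) : Prop :=
  IsMultipackingR P (P.card - 1) M

lemma cnt_range (n : ℕ) :
    ((Finset.range n).filter (fun i => i % 3 = 0)).card = (n + 2) / 3 := by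
  induction n with
  | zero => simp
  | succ k ih =>
    rw [Finset.range_add_one, Finset.filter_insert]
    split_ifs with h
    · rw [Finset.card_insert_of_notMem (by simp)]
      omega
    · omega

/-- Any finite point set on the real line with pairwise distinct distances admits a
multipacking of size at least `⌊n/3⌋`. -/
theorem multipacking_lower_bound (P : Finset ℝ) (hd : DistinctDistances P) :
    ∃ M : Finset ℝ, IsMultipacking P M ∧ P.card / 3 ≤ M.card := by
  classical
  set n := P.card with hn
  let e := P.orderIsoOfFin hn.symm
  let f : Fin n → ℝ := fun i => (e i : ℝ)
  have hfP : ∀ i, f i ∈ P := fun i => (e i).2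
  have hfmono : StrictMono f := fun i j hij => Subtype.coe_lt_coe.2 (e.strictMono hij)
  have hfinj : Function.Injective f := hfmono.injective
  have hfsurj : ∀ x ∈ P, ∃ i, f i = x := by
    intro x hx
    exact ⟨e.symm ⟨x, hx⟩, by simp [f]⟩
  let T : Finset (Fin n) := Finset.univ.filter (fun i => (i : ℕ) % 3 = 0)
  let M : Finset ℝ := T.image f
  have hMP : M ⊆ P := by
    intro x hx
    obtain ⟨i, _, rfl⟩ := Finset.mem_image.1 hx
    exact hfP i
  have hTcard : T.card = (n + 2) / 3 := by
    rw [← cnt_range n]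
    apply Finset.card_bij (fun (i : Fin n) _ => (i : ℕ))
    · intro i hi
      simp only [T, Finset.mem_filter, Finset.mem_univ, true_and] at hi
      simp [Finset.mem_range, i.2, hi]
    · intro i _ j _ h
      exact Fin.val_injective h
    · intro j hj
      simp only [Finset.mem_filter, Finset.mem_range] at hj
      exact ⟨⟨j, hj.1⟩, by simp [T, hj.2], rfl⟩
  have hMcard : M.card = (n + 2) / 3 := by
    rw [Finset.card_image_of_injective _ hfinj, hTcard]
  refine ⟨M, ⟨hMP, ?_⟩, by omega⟩
  intro v hv s hs1 _ N hN
  obtain ⟨hNP, hvN, hcard, hmin⟩ := hN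
  obtain ⟨m, hm⟩ := hfsurj v hv
  let I : Finset (Fin n) := Finset.univ.filter (fun i => f i ∈ N)
  have hNI : N = I.image f := by
    ext x
    constructor
    · intro hx
      obtain ⟨i, rfl⟩ := hfsurj x (hNP hx)
      exact Finset.mem_image.2 ⟨i, by simp [I, hx], rfl⟩
    · intro hx
      obtain ⟨i, hi, rfl⟩ := Finset.mem_image.1 hx
      simp only [I, Finset.mem_filter] at hi
      exact hi.2
  have hcardI : I.card = s + 1 := by
    rw [hNI, Finset.card_image_of_injective _ hfinj] at hcard
    exact hcard
  have hmI : m ∈ I := by simp [I, hm, hvN]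
  have key : ∀ i ∈ I, ∀ j : Fin n, m ≤ j → j ≤ i → j ∈ I := by
    intro i hi j hmj hji
    by_contra hj
    have hjN : f j ∉ N := by simpa [I] using hj
    have hiN : f i ∈ N := by simpa [I] using hi
    have hlt := hmin (f i) hiN (f j) (hfP j) hjN
    have h1 : v ≤ f j := hm ▸ hfmono.monotone hmj
    have h2 : f j ≤ f i := hfmono.monotone hji
    rw [Real.dist_eq, Real.dist_eq, abs_of_nonpos (by linarith),
      abs_of_nonpos (by linarith)] at hlt
    linarith
  have key' : ∀ i ∈ I, ∀ j : Fin n, i ≤ j → j ≤ m → j ∈ I := by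
    intro i hi j hij hjm
    by_contra hj
    have hjN : f j ∉ N := by simpa [I] using hj
    have hiN : f i ∈ N := by simpa [I] using hi
    have hlt := hmin (f i) hiN (f j) (hfP j) hjN
    have h1 : f j ≤ v := hm ▸ hfmono.monotone hjm
    have h2 : f i ≤ f j := hfmono.monotone hij
    rw [Real.dist_eq, Real.dist_eq, abs_of_nonneg (by linarith),
      abs_of_nonneg (by linarith)] at hlt
    linarith
  have hIne : I.Nonempty := ⟨m, hmI⟩
  set a := I.min' hIne with ha
  set b := I.max' hIne with hb
  have hIcc : I = Finset.Icc a b := by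
    apply Finset.Subset.antisymm
    · intro x hx
      exact Finset.mem_Icc.2 ⟨I.min'_le x hx, I.le_max' x hx⟩
    · intro j hj
      rw [Finset.mem_Icc] at hj
      rcases le_total j m with h | h
      · exact key' a (I.min'_mem hIne) j hj.1 h
      · exact key b (I.max'_mem hIne) j h hj.2
  have hab : (b : ℕ) + 1 - (a : ℕ) = s + 1 := by
    rw [hIcc, Fin.card_Icc] at hcardI
    exact hcardI
  have hale : (a : ℕ) ≤ (b : ℕ) := Fin.le_def.1 (I.min'_le b (I.max'_mem hIne))
  have hNM : N ∩ M = ((Finset.Icc a b) ∩ T).image f := by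
    rw [hNI, hIcc, Finset.image_inter _ _ hfinj]
  have hcnt : ((Finset.Icc a b) ∩ T).card ≤ ((b : ℕ) - (a : ℕ)) / 3 + 1 := by
    have := Finset.card_le_card_of_injOn (s := Finset.Icc a b ∩ T) (t := Finset.range (((b : ℕ) - (a : ℕ)) / 3 + 1))
      (fun i : Fin n => ((i : ℕ) - (a : ℕ)) / 3) ?_ ?_
    · simpa using this
    · intro i hi
      simp only [Finset.coe_inter, Set.mem_inter_iff, Finset.mem_coe, Finset.mem_inter, Finset.mem_Icc, T, Finset.mem_filter] at hi
      have h1 : (a : ℕ) ≤ (i : ℕ) := Fin.le_def.1 hi.1.1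
      have h2 : (i : ℕ) ≤ (b : ℕ) := Fin.le_def.1 hi.1.2
      simp only [Finset.mem_coe, Finset.mem_range]
      omega
    · intro i hi j hj hij
      simp only [Finset.coe_inter, Set.mem_inter_iff, Finset.mem_coe, Finset.mem_Icc,
        T, Finset.mem_filter] at hi hj
      have h1 : (a : ℕ) ≤ (i : ℕ) := Fin.le_def.1 hi.1.1
      have h2 : (i : ℕ) ≤ (b : ℕ) := Fin.le_def.1 hi.1.2
      have h3 : (a : ℕ) ≤ (j : ℕ) := Fin.le_def.1 hj.1.1
      have h4 : (j : ℕ) ≤ (b : ℕ) := Fin.le_def.1 hj.1.2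
      have h5 : (i : ℕ) % 3 = 0 := hi.2.2
      have h6 : (j : ℕ) % 3 = 0 := hj.2.2
      have hij' : ((i : ℕ) - (a : ℕ)) / 3 = ((j : ℕ) - (a : ℕ)) / 3 := hij
      exact Fin.val_injective (by omega)
  rw [hNM, Finset.card_image_of_injective _ hfinj]
  omega
end

section
/- Let P = {p_1, p_2, …, p_n} be a finite set of points on the real line listed in increasing order, with all pairwise distances between distinct pairs of points of P distinct. Then the set M = {p_1, p_4, p_7, …} consisting of every third point starting from p_1 (i.e., the points p_{3k+1} with 3k+1 ≤ n) is a multipacking of P. -/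
open scoped Classical

lemma count_mult3 (l s : ℕ) (hs : 1 ≤ s) :
    2 * ((Finset.Icc l (l + s)).filter (fun i => i % 3 = 0)).card ≤ s + 1 := by
  have h1 : ((Finset.Icc l (l + s)).filter (fun i => i % 3 = 0)).card
      ≤ (Finset.Icc ((l + 2) / 3) ((l + s) / 3)).card := by
    apply Finset.card_le_card_of_injOn (fun i => i / 3)
    · intro i hi
      simp only [Finset.mem_coe, Finset.mem_filter, Finset.mem_Icc] at hi ⊢
      omega
    · intro a ha b hb hab
      simp only [Finset.mem_coe, Finset.coe_filter, Finset.mem_Icc, Set.mem_setOf_eq] at ha hb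
      simp only at hab
      omega
  rw [Nat.card_Icc] at h1
  omega

/-- If `p_1 < p_2 < ⋯ < p_n` are points on the line with pairwise distinct distances,
then the set of every third point `{p_1, p_4, p_7, …}` is a multipacking. -/
theorem everyThird_isMultipacking (n : ℕ) (p : Fin n → ℝ) (hmono : StrictMono p)
    (hd : DistinctDistances (Finset.image p Finset.univ)) :
    IsMultipacking (Finset.image p Finset.univ)
      (Finset.image p (Finset.univ.filter fun i : Fin n => (i : ℕ) % 3 = 0)) := by
  have hinj : Function.Injective p := hmono.injective
  constructor
  · exact Finset.image_subset_image (Finset.filter_subset _ _)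
  · intro v hv s hs1 hs2 N hN
    obtain ⟨hNP, hvN, hcard, hnear⟩ := hN
    set S : Finset (Fin n) := Finset.univ.filter (fun i : Fin n => p i ∈ N) with hS
    have hmemS : ∀ i : Fin n, i ∈ S ↔ p i ∈ N := by
      intro i; simp [hS]
    have hNS : N = S.image p := by
      ext x
      simp only [Finset.mem_image]
      constructor
      · intro hx
        obtain ⟨i, _, rfl⟩ := Finset.mem_image.mp (hNP hx)
        exact ⟨i, (hmemS i).mpr hx, rfl⟩
      · rintro ⟨i, hi, rfl⟩
        exact (hmemS i).mp hi
    have hScard : S.card = s + 1 := by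
      rw [hNS, Finset.card_image_of_injective _ hinj] at hcard
      exact hcard
    set T : Finset ℕ := S.image Fin.val with hT
    have hTcard : T.card = s + 1 := by
      rw [hT, Finset.card_image_of_injective _ Fin.val_injective, hScard]
    have hTne : T.Nonempty := by
      rw [← Finset.card_pos, hTcard]; omega
    set l := T.min' hTne with hl
    set h := T.max' hTne with hh
    have hmemT : ∀ j : ℕ, j ∈ T ↔ ∃ hj : j < n, p ⟨j, hj⟩ ∈ N := by
      intro j
      simp only [hT, Finset.mem_image]
      constructor
      · rintro ⟨i, hi, rfl⟩
        exact ⟨i.isLt, by simpa using (hmemS i).mp hi⟩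
      · rintro ⟨hj, hp⟩
        exact ⟨⟨j, hj⟩, (hmemS _).mpr hp, rfl⟩
    have hhT : h ∈ T := T.max'_mem hTne
    have hlT : l ∈ T := T.min'_mem hTne
    obtain ⟨hhn, hhN⟩ := (hmemT h).mp hhT
    obtain ⟨hln, hlN⟩ := (hmemT l).mp hlT
    -- T is an interval
    have hTIcc : T = Finset.Icc l h := by
      apply Finset.Subset.antisymm
      · intro j hj
        rw [Finset.mem_Icc]
        exact ⟨T.min'_le j hj, T.le_max' j hj⟩
      · intro j hj
        rw [Finset.mem_Icc] at hj
        by_contra hjT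
        have hjn : j < n := lt_of_le_of_lt hj.2 hhn
        have hjN : p ⟨j, hjn⟩ ∉ N := fun hc => hjT ((hmemT j).mpr ⟨hjn, hc⟩)
        have hjP : p ⟨j, hjn⟩ ∈ Finset.image p Finset.univ :=
          Finset.mem_image_of_mem p (Finset.mem_univ _)
        have hlj : l < j := by
          rcases lt_or_eq_of_le hj.1 with h' | h'
          · exact h'
          · exact absurd (h' ▸ hlT) hjT
        have hjh : j < h := by
          rcases lt_or_eq_of_le hj.2 with h' | h'
          · exact h'
          · exact absurd (h'.symm ▸ hhT) hjT
        have h1 := hnear (p ⟨l, hln⟩) hlN (p ⟨j, hjn⟩) hjP hjN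
        have h2 := hnear (p ⟨h, hhn⟩) hhN (p ⟨j, hjn⟩) hjP hjN
        have hpl : p ⟨l, hln⟩ < p ⟨j, hjn⟩ := hmono (by simpa using hlj)
        have hph : p ⟨j, hjn⟩ < p ⟨h, hhn⟩ := hmono (by simpa using hjh)
        rw [Real.dist_eq, Real.dist_eq] at h1 h2
        rcases abs_cases (v - p ⟨j, hjn⟩) with ⟨hA, _⟩ | ⟨hA, _⟩
        · have := le_abs_self (v - p ⟨l, hln⟩)
          linarith
        · have := neg_abs_le (v - p ⟨h, hhn⟩)
          linarith
    have hhls : h = l + s := by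
      have : T.card = h + 1 - l := by rw [hTIcc, Nat.card_Icc]
      have hle : l ≤ h := T.min'_le h hhT
      omega
    -- intersection
    have hNM : N ∩ Finset.image p (Finset.univ.filter fun i : Fin n => (i : ℕ) % 3 = 0)
        = (S.filter (fun i : Fin n => (i : ℕ) % 3 = 0)).image p := by
      ext x
      simp only [Finset.mem_inter, Finset.mem_image, Finset.mem_filter, Finset.mem_univ,
        true_and]
      constructor
      · rintro ⟨hxN, i, hi, rfl⟩
        exact ⟨i, ⟨(hmemS i).mpr hxN, hi⟩, rfl⟩
      · rintro ⟨i, ⟨hiS, hi⟩, rfl⟩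
        exact ⟨(hmemS i).mp hiS, i, hi, rfl⟩
    have hfilT : T.filter (fun j => j % 3 = 0)
        = (S.filter (fun i : Fin n => (i : ℕ) % 3 = 0)).image Fin.val := by
      rw [hT, Finset.filter_image]
    have hcardeq : (N ∩ Finset.image p
        (Finset.univ.filter fun i : Fin n => (i : ℕ) % 3 = 0)).card
        = (T.filter (fun j => j % 3 = 0)).card := by
      rw [hNM, hfilT, Finset.card_image_of_injective _ hinj,
        Finset.card_image_of_injective _ Fin.val_injective]
    rw [hcardeq, hTIcc, hhls]
    exact count_mult3 l s hs1
end

section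
/- Let P ⊆ ℝ be a finite point set with all pairwise distances between distinct pairs of points distinct, let 1 ≤ r ≤ |P|−1, and let M and M' be two r-multipackings of P. List the elements of M in increasing order as a_{g_1} < a_{g_2} < ⋯ < a_{g_m} and those of M' as a_{h_1} < a_{h_2} < ⋯ < a_{h_{m'}}. Suppose t is an index with t ≤ m and t ≤ m' such that a_{g_i} = a_{h_i} for all i < t and a_{g_t} < a_{h_t}. Then the set M'' = {a_{g_1}, …, a_{g_t}} ∪ {a_{h_{t+1}}, …, a_{h_{m'}}} is also an r-multipacking of P. -/
open scoped Classical

/-- A neighborhood on the real line is order-convex within `P`. -/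
lemma nbhd_convex (P : Finset ℝ) (v : ℝ) (s : ℕ) (N : Finset ℝ)
    (hN : IsNbhd P v s N) {a b x : ℝ} (ha : a ∈ N) (hb : b ∈ N) (hx : x ∈ P)
    (h1 : a ≤ x) (h2 : x ≤ b) : x ∈ N := by
  by_contra hxN
  have ha' := hN.2.2.2 a ha x hx hxN
  have hb' := hN.2.2.2 b hb x hx hxN
  rw [Real.dist_eq, Real.dist_eq] at ha' hb'
  rcases le_total v x with h | h
  · rw [abs_of_nonpos (by linarith : v - x ≤ 0),
      abs_of_nonpos (by linarith : v - b ≤ 0)] at hb'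
    linarith
  · rw [abs_of_nonneg (by linarith : 0 ≤ v - x),
      abs_of_nonneg (by linarith : 0 ≤ v - a)] at ha'
    linarith

/-- Exchange lemma for `r`-multipackings on the line: if `M` and `M'` are two
`r`-multipackings listed in increasing order as `a_{g_1} < ⋯ < a_{g_m}` and
`a_{h_1} < ⋯ < a_{h_{m'}}`, agreeing up to position `t` (here `0`-indexed: equal at all
indices `< t`) with `a_{g_t} < a_{h_t}` at position `t`, then
`{a_{g_1}, …, a_{g_t}} ∪ {a_{h_{t+1}}, …, a_{h_{m'}}}` is also an `r`-multipacking. -/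
theorem multipacking_exchange (P : Finset ℝ) (hd : DistinctDistances P)
    (r : ℕ) (hr1 : 1 ≤ r) (hr2 : r ≤ P.card - 1)
    (M M' : Finset ℝ) (hMP : IsMultipackingR P r M) (hMP' : IsMultipackingR P r M')
    (m m' : ℕ) (hm : M.card = m) (hm' : M'.card = m')
    (t : ℕ) (htm : t < m) (htm' : t < m')
    (heq : ∀ i : ℕ, (hi : i < t) →
      M.orderEmbOfFin hm ⟨i, hi.trans htm⟩ = M'.orderEmbOfFin hm' ⟨i, hi.trans htm'⟩)
    (hlt : M.orderEmbOfFin hm ⟨t, htm⟩ < M'.orderEmbOfFin hm' ⟨t, htm'⟩) :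
    IsMultipackingR P r
      ((M.filter fun x => x ≤ M.orderEmbOfFin hm ⟨t, htm⟩) ∪
       (M'.filter fun x => M'.orderEmbOfFin hm' ⟨t, htm'⟩ < x)) := by
  set g : ℝ := M.orderEmbOfFin hm ⟨t, htm⟩ with hg
  set h : ℝ := M'.orderEmbOfFin hm' ⟨t, htm'⟩ with hh
  set A : Finset ℝ := M.filter fun x => x ≤ g with hA
  set B : Finset ℝ := M'.filter fun x => h < x with hB
  have hAM : A ⊆ M := Finset.filter_subset _ _
  have hBM' : B ⊆ M' := Finset.filter_subset _ _
  have hhM' : h ∈ M' := Finset.orderEmbOfFin_mem _ _ _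
  have hhP : h ∈ P := hMP'.1 hhM'
  -- any element of A other than g lies in M'
  have key : ∀ x ∈ A, x ≠ g → x ∈ M' ∧ x < g := by
    intro x hx hxg
    rw [hA, Finset.mem_filter] at hx
    obtain ⟨hxM, hxle⟩ := hx
    have : x ∈ Set.range (M.orderEmbOfFin hm) := by
      rw [Finset.range_orderEmbOfFin]; exact hxM
    obtain ⟨j, hj⟩ := this
    have hjle : j ≤ (⟨t, htm⟩ : Fin m) := by
      rw [← (M.orderEmbOfFin hm).le_iff_le, hj]; exact hxle
    have hjt : (j : ℕ) < t := by
      rcases lt_or_eq_of_le hjle with h' | h'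
      · exact h'
      · exact absurd (by rw [← hj, h']) hxg
    have hxlt : x < g := by
      rw [← hj, hg]
      exact (M.orderEmbOfFin hm).lt_iff_lt.2 (by exact hjle.lt_of_ne (by
        intro hc; exact hjt.ne (by simpa using congrArg Fin.val hc)))
    refine ⟨?_, hxlt⟩
    have := heq j hjt
    rw [← hj]
    have hj' : (⟨(j : ℕ), hjt.trans htm⟩ : Fin m) = j := by ext; rfl
    rw [← hj'] at *
    rw [this]
    exact Finset.orderEmbOfFin_mem _ _ _
  constructor
  · intro x hx
    rcases Finset.mem_union.1 hx with hx | hx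
    · exact hMP.1 (hAM hx)
    · exact hMP'.1 (hBM' hx)
  · intro v hv s hs1 hs2 N hN
    by_cases hNB : (N ∩ B).Nonempty
    · -- compare with M'
      obtain ⟨b, hb⟩ := hNB
      rw [Finset.mem_inter] at hb
      obtain ⟨hbN, hbB⟩ := hb
      rw [hB, Finset.mem_filter] at hbB
      have hcard : (N ∩ (A ∪ B)).card ≤ (N ∩ M').card := by
        apply Finset.card_le_card_of_injOn (fun x => if x = g then h else x)
        · intro x hx
          rw [Finset.mem_coe, Finset.mem_inter] at hx
          obtain ⟨hxN, hxAB⟩ := hx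
          by_cases hxg : x = g
          · simp only [hxg, if_pos rfl]
            rw [Finset.mem_coe, Finset.mem_inter]
            refine ⟨?_, hhM'⟩
            exact nbhd_convex P v s N hN (hxg ▸ hxN) hbN hhP hlt.le hbB.2.le
          · simp only [if_neg hxg]
            rw [Finset.mem_coe, Finset.mem_inter]
            refine ⟨hxN, ?_⟩
            rcases Finset.mem_union.1 hxAB with hx' | hx'
            · exact (key x hx' hxg).1
            · exact hBM' hx'
        · intro x hx y hy hxy
          simp only at hxy
          by_cases hxg : x = g <;> by_cases hyg : y = g
          · rw [hxg, hyg]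
          · -- f x = h, f y = y, so y = h; but y ∈ A ∪ B gives contradiction
            rw [if_pos hxg, if_neg hyg] at hxy
            exfalso
            rw [Finset.mem_coe, Finset.mem_inter] at hy
            rcases Finset.mem_union.1 hy.2 with hy' | hy'
            · have := (key y hy' hyg).2
              rw [← hxy] at this
              exact absurd (this.trans hlt) (lt_irrefl h)
            · rw [hB, Finset.mem_filter] at hy'
              rw [← hxy] at hy'
              exact absurd hy'.2 (lt_irrefl h)
          · rw [if_neg hxg, if_pos hyg] at hxy
            exfalso
            rw [Finset.mem_coe, Finset.mem_inter] at hx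
            rcases Finset.mem_union.1 hx.2 with hx' | hx'
            · have := (key x hx' hxg).2
              rw [hxy] at this
              exact absurd (this.trans hlt) (lt_irrefl h)
            · rw [hB, Finset.mem_filter] at hx'
              rw [hxy] at hx'
              exact absurd hx'.2 (lt_irrefl h)
          · rwa [if_neg hxg, if_neg hyg] at hxy
      calc 2 * (N ∩ (A ∪ B)).card ≤ 2 * (N ∩ M').card := by omega
        _ ≤ s + 1 := hMP'.2 v hv s hs1 hs2 N hN
    · -- N ∩ B = ∅ : compare with M
      have hsub : N ∩ (A ∪ B) ⊆ N ∩ M := by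
        intro x hx
        rw [Finset.mem_inter] at hx ⊢
        refine ⟨hx.1, ?_⟩
        rcases Finset.mem_union.1 hx.2 with hx' | hx'
        · exact hAM hx'
        · exact absurd ⟨x, Finset.mem_inter.2 ⟨hx.1, hx'⟩⟩ hNB
      calc 2 * (N ∩ (A ∪ B)).card ≤ 2 * (N ∩ M).card := by
            have := Finset.card_le_card hsub; omega
        _ ≤ s + 1 := hMP.2 v hv s hs1 hs2 N hN
end

section
/- There exists a set P of 5 points in the Euclidean plane ℝ² with all pairwise distances between distinct pairs of points distinct whose multipacking number equals 1; that is, P admits no multipacking of size 2, equivalently, for every two distinct points a, b ∈ P there is a point w ∈ P with {a, b} ⊆ N_2[w]. (Such a set is given by a suitable convex pentagon in which each vertex has its two neighboring vertices on the pentagon as its two nearest neighbors.) -/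
open scoped Classical

/-! ### Auxiliary constructions -/

noncomputable def MPpt (a b : ℝ) : EuclideanSpace ℝ (Fin 2) := WithLp.toLp 2 ![a, b]

lemma MPdist_pt (a b c d : ℝ) :
    dist (MPpt a b) (MPpt c d) = Real.sqrt ((a - c)^2 + (b - d)^2) := by
  rw [EuclideanSpace.dist_eq]
  simp [MPpt, Fin.sum_univ_two, Real.dist_eq, sq_abs]

noncomputable def MPq : Fin 5 → EuclideanSpace ℝ (Fin 2) :=
  ![MPpt 19 2, MPpt 4 19, MPpt (-18) 13, MPpt (-16) (-10), MPpt 8 (-20)]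

def MPf : Fin 5 → Fin 5 → ℕ :=
  ![![0,514,1490,1369,605],![514,0,520,1241,1537],![1490,520,0,533,1765],
    ![1369,1241,533,0,676],![605,1537,1765,676,0]]

def MPnb : Fin 5 → Finset (Fin 5) := fun i => {i - 1, i, i + 1}

lemma MPq_inj : Function.Injective MPq := by
  intro i j h
  fin_cases i <;> fin_cases j <;> first
    | rfl
    | (exfalso; have h0 := congrArg (fun x => x 0) h; have h1 := congrArg (fun x => x 1) h;
       simp [MPq, MPpt] at h0 h1 <;> norm_num at h0)

lemma MPdist_q (i j : Fin 5) : dist (MPq i) (MPq j) = Real.sqrt (MPf i j) := by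
  fin_cases i <;> fin_cases j <;> simp [MPq, MPf, MPdist_pt] <;> norm_num

lemma MPf_inj : ∀ i j k l : Fin 5, i ≠ j → k ≠ l →
    ¬((i = k ∧ j = l) ∨ (i = l ∧ j = k)) → MPf i j ≠ MPf k l := by decide

lemma MPf_lt : ∀ i : Fin 5, ∀ j ∈ MPnb i, ∀ l : Fin 5, l ∉ MPnb i → MPf i j < MPf i l := by
  decide

lemma MPmem_nb_self : ∀ i : Fin 5, i ∈ MPnb i := by decide

lemma MPnb_card : ∀ i : Fin 5, (MPnb i).card = 3 := by decide

lemma MPcover : ∀ i j : Fin 5, i ≠ j → ∃ k, i ∈ MPnb k ∧ j ∈ MPnb k := by decide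

noncomputable def MPP : Finset (EuclideanSpace ℝ (Fin 2)) := Finset.univ.image MPq

lemma MPq_mem (i : Fin 5) : MPq i ∈ MPP :=
  Finset.mem_image_of_mem MPq (Finset.mem_univ i)

lemma MPP_card : MPP.card = 5 := by
  rw [MPP, Finset.card_image_of_injective _ MPq_inj, Finset.card_univ]
  simp

lemma MPisNbhd (k : Fin 5) : IsNbhd MPP (MPq k) 2 ((MPnb k).image MPq) := by
  refine ⟨Finset.image_subset_image (Finset.subset_univ _), 
    Finset.mem_image_of_mem MPq (MPmem_nb_self k), ?_, ?_⟩
  · rw [Finset.card_image_of_injective _ MPq_inj, MPnb_card]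
  · intro a ha b hb hbn
    obtain ⟨j, hj, rfl⟩ := Finset.mem_image.mp ha
    obtain ⟨l, -, rfl⟩ := Finset.mem_image.mp hb
    have hl : l ∉ MPnb k := fun h => hbn (Finset.mem_image_of_mem MPq h)
    rw [MPdist_q, MPdist_q]
    exact Real.sqrt_lt_sqrt (Nat.cast_nonneg _) (by exact_mod_cast MPf_lt k j hj l hl)

lemma MPcover' : ∀ a ∈ MPP, ∀ b ∈ MPP, a ≠ b → ∃ w ∈ MPP,
    ∃ N : Finset (EuclideanSpace ℝ (Fin 2)), IsNbhd MPP w 2 N ∧ a ∈ N ∧ b ∈ N := by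
  intro a ha b hb hab
  obtain ⟨i, -, rfl⟩ := Finset.mem_image.mp ha
  obtain ⟨j, -, rfl⟩ := Finset.mem_image.mp hb
  have hij : i ≠ j := fun h => hab (by rw [h])
  obtain ⟨k, hik, hjk⟩ := MPcover i j hij
  exact ⟨MPq k, MPq_mem k, (MPnb k).image MPq, MPisNbhd k,
    Finset.mem_image_of_mem MPq hik, Finset.mem_image_of_mem MPq hjk⟩

/-- There is a set of `5` points in the Euclidean plane with pairwise distinct distances
whose multipacking number equals `1`: it has a multipacking of size `1`, every
multipacking has size at most `1`, and for every two distinct points `a, b ∈ P` there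
is a point `w ∈ P` with `{a, b} ⊆ N_2[w]`. -/
theorem five_points_multipacking_one :
    ∃ P : Finset (EuclideanSpace ℝ (Fin 2)), P.card = 5 ∧ DistinctDistances P ∧
      (∃ M : Finset (EuclideanSpace ℝ (Fin 2)), IsMultipacking P M ∧ M.card = 1) ∧
      (∀ M : Finset (EuclideanSpace ℝ (Fin 2)), IsMultipacking P M → M.card ≤ 1) ∧
      ∀ a ∈ P, ∀ b ∈ P, a ≠ b → ∃ w ∈ P, ∃ N : Finset (EuclideanSpace ℝ (Fin 2)),
        IsNbhd P w 2 N ∧ a ∈ N ∧ b ∈ N := by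
  refine ⟨MPP, MPP_card, ?_, ?_, ?_, MPcover'⟩
  · -- distinct distances
    intro a ha b hb c hc d hd hab hcd hne
    obtain ⟨i, -, rfl⟩ := Finset.mem_image.mp ha
    obtain ⟨j, -, rfl⟩ := Finset.mem_image.mp hb
    obtain ⟨k, -, rfl⟩ := Finset.mem_image.mp hc
    obtain ⟨l, -, rfl⟩ := Finset.mem_image.mp hd
    have hij : i ≠ j := fun h => hab (by rw [h])
    have hkl : k ≠ l := fun h => hcd (by rw [h])
    have hidx : ¬((i = k ∧ j = l) ∨ (i = l ∧ j = k)) := by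
      rintro (⟨h1, h2⟩ | ⟨h1, h2⟩)
      · exact hne (Or.inl ⟨by rw [h1], by rw [h2]⟩)
      · exact hne (Or.inr ⟨by rw [h1], by rw [h2]⟩)
    rw [MPdist_q, MPdist_q]
    intro hs
    have hnat : (MPf i j : ℝ) = MPf k l :=
      (Real.sqrt_inj (Nat.cast_nonneg _) (Nat.cast_nonneg _)).mp hs
    exact MPf_inj i j k l hij hkl hidx (by exact_mod_cast hnat)
  · -- multipacking of size 1
    refine ⟨{MPq 0}, ⟨Finset.singleton_subset_iff.mpr (MPq_mem 0), ?_⟩,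
      Finset.card_singleton _⟩
    intro v hv s hs1 hs2 N hN
    have h1 : (N ∩ {MPq 0}).card ≤ 1 :=
      le_trans (Finset.card_le_card Finset.inter_subset_right) (le_of_eq (Finset.card_singleton _))
    convert (show 2 * (N ∩ {MPq 0}).card ≤ s + 1 by omega)
  · -- every multipacking has size at most 1
    intro M hM
    by_contra h
    push_neg at h
    obtain ⟨a, ha, b, hb, hab⟩ := Finset.one_lt_card.mp h
    obtain ⟨w, hw, N, hN, haN, hbN⟩ := MPcover' a (hM.1 ha) b (hM.1 hb) hab
    have hbound := hM.2 w hw 2 (by norm_num) (by rw [MPP_card]; norm_num) N hN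
    have h2 : 1 < (N ∩ M).card :=
      Finset.one_lt_card.mpr ⟨a, Finset.mem_inter.mpr ⟨haN, ha⟩,
        b, Finset.mem_inter.mpr ⟨hbN, hb⟩, hab⟩
    exact absurd (show 2 * (N ∩ M).card ≤ 2 + 1 by convert hbound) (by omega)
end

section
/- Let P be a finite set of points in the Euclidean plane ℝ² with all pairwise distances between distinct pairs of points distinct, and let G_P be the simple graph on vertex set P in which, for every v ∈ P with first neighbor u_1 = n_1(v) and second neighbor u_2 = n_2(v), the three edges v u_1, v u_2, and u_1 u_2 are present (and no other edges). Then every vertex of G_P has degree at most 17. -/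
open scoped Classical

/-- `u` is the (unique) nearest neighbor `n_1(v)` of `v` in `P`. -/
def IsNearest {α : Type*} [MetricSpace α] (P : Finset α) (v u : α) : Prop :=
  u ∈ P ∧ u ≠ v ∧ ∀ w ∈ P, w ≠ v → w ≠ u → dist v u < dist v w

/-- `u` is the second nearest neighbor `n_2(v)` of `v` in `P`. -/
def IsSecondNearest {α : Type*} [MetricSpace α] (P : Finset α) (v u : α) : Prop :=
  ∃ u1, IsNearest P v u1 ∧ u ∈ P ∧ u ≠ v ∧ u ≠ u1 ∧
    ∀ w ∈ P, w ≠ v → w ≠ u1 → w ≠ u → dist v u < dist v w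

/-- The nearest-neighbor graph of `P`: distinct points `u, v` are adjacent iff `u` is the
nearest neighbor of `v` in `P` or `v` is the nearest neighbor of `u` in `P`. -/
def NNG {α : Type*} [MetricSpace α] (P : Finset α) : SimpleGraph α where
  Adj u v := u ≠ v ∧ (IsNearest P v u ∨ IsNearest P u v)
  symm := by
    constructor
    rintro u v ⟨h1, h2⟩
    exact ⟨h1.symm, h2.symm⟩
  loopless := by
    constructor
    rintro u ⟨h1, _⟩
    exact h1 rfl

/-- The graph `G_P`: for each `v ∈ P` with first neighbor `u_1` and second neighbor `u_2`,
the edges `v u_1`, `v u_2` and `u_1 u_2` are present; equivalently, distinct `a, b` are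
adjacent iff both lie in `N_2[v]` for some `v ∈ P`. -/
def GP {α : Type*} [MetricSpace α] (P : Finset α) : SimpleGraph α where
  Adj a b := a ≠ b ∧ ∃ v ∈ P, ∃ N : Finset α, IsNbhd P v 2 N ∧ a ∈ N ∧ b ∈ N
  symm := by
    constructor
    rintro a b ⟨h1, v, hv, N, hN, ha, hb⟩
    exact ⟨h1.symm, v, hv, N, hN, hb, ha⟩
  loopless := by
    constructor
    rintro a ⟨h1, _⟩
    exact h1 rfl

noncomputable section

lemma myKeyRe (a b : ℂ) :
    (a * (starRingEnd ℂ) b).re = ‖a‖ * ‖b‖ * Real.cos (a.arg - b.arg) := by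
  conv_lhs => rw [← Complex.norm_mul_exp_arg_mul_I a, ← Complex.norm_mul_exp_arg_mul_I b]
  rw [map_mul, ← Complex.exp_conj, map_mul, Complex.conj_I, Complex.conj_ofReal,
    Complex.conj_ofReal]
  have h1 : (↑(‖a‖) * Complex.exp (↑a.arg * Complex.I) *
      (↑(‖b‖) * Complex.exp (↑b.arg * -Complex.I))) =
      ((‖a‖ * ‖b‖ : ℝ) : ℂ) * Complex.exp (↑(a.arg - b.arg) * Complex.I) := by
    calc (↑(‖a‖) * Complex.exp (↑a.arg * Complex.I) *
        (↑(‖b‖) * Complex.exp (↑b.arg * -Complex.I)))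
        = ((‖a‖ * ‖b‖ : ℝ) : ℂ) *
          (Complex.exp (↑a.arg * Complex.I) * Complex.exp (↑b.arg * -Complex.I)) := by
          push_cast; ring
      _ = ((‖a‖ * ‖b‖ : ℝ) : ℂ) *
          Complex.exp (↑a.arg * Complex.I + ↑b.arg * -Complex.I) := by
          rw [← Complex.exp_add]
      _ = ((‖a‖ * ‖b‖ : ℝ) : ℂ) *
          Complex.exp (↑(a.arg - b.arg) * Complex.I) := by
          congr 1
          push_cast
          ring
  rw [h1, Complex.re_ofReal_mul, Complex.exp_ofReal_mul_I_re]

lemma myKeyLt {a b : ℂ} (ha : a ≠ 0) (hcos : 1/2 ≤ Real.cos (a.arg - b.arg))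
    (hlt : ‖a‖ < ‖b‖) : ‖a - b‖ < ‖b‖ := by
  have h0 : 0 < ‖a‖ := norm_pos_iff.mpr ha
  have hb : 0 < ‖b‖ := lt_trans h0 hlt
  have hsq : ‖a - b‖ ^ 2 < ‖b‖ ^ 2 := by
    rw [Complex.sq_norm, Complex.normSq_sub, ← Complex.sq_norm a, ← Complex.sq_norm b, myKeyRe]
    have e1 : 0 ≤ ‖a‖ * ‖b‖ * (2 * Real.cos (a.arg - b.arg) - 1) :=
      mul_nonneg (mul_nonneg h0.le hb.le) (by linarith)
    have e2 : 0 < ‖a‖ * (‖b‖ - ‖a‖) := mul_pos h0 (by linarith)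
    nlinarith [e1, e2]
  exact lt_of_pow_lt_pow_left₀ 2 (norm_nonneg b) hsq

lemma myCosHalf {x : ℝ} (h0 : 0 ≤ x) (h1 : x ≤ Real.pi/3) : 1/2 ≤ Real.cos x := by
  have hp := Real.pi_pos
  have h2 := Real.cos_le_cos_of_nonneg_of_le_pi h0 (by linarith : Real.pi/3 ≤ Real.pi) h1
  rw [Real.cos_pi_div_three] at h2
  exact h2

lemma mySix (θ : Fin 6 → ℝ) (hm : StrictMono θ) (hlo : ∀ i, -Real.pi < θ i)
    (hhi : ∀ i, θ i ≤ Real.pi)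
    (hpair : ∀ i j, i ≠ j → Real.cos (θ i - θ j) < 1/2) : False := by
  have hp := Real.pi_pos
  have gap : ∀ i j : Fin 6, i < j → Real.pi/3 < θ j - θ i := by
    intro i j hij
    by_contra hcon
    push_neg at hcon
    have h0 : (0:ℝ) ≤ θ j - θ i := by linarith [hm hij]
    have h1 := myCosHalf h0 hcon
    have h2 := hpair j i hij.ne'
    linarith
  have c01 := gap 0 1 (by decide)
  have c12 := gap 1 2 (by decide)
  have c23 := gap 2 3 (by decide)
  have c34 := gap 3 4 (by decide)
  have c45 := gap 4 5 (by decide)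
  have hc := hpair 5 0 (by decide)
  have heq : Real.cos (θ 5 - θ 0) = Real.cos (2*Real.pi - (θ 5 - θ 0)) := by
    rw [show 2*Real.pi - (θ 5 - θ 0) = -((θ 5 - θ 0) - 2*Real.pi) by ring, Real.cos_neg,
      Real.cos_sub_two_pi]
  have h0' : 0 ≤ 2*Real.pi - (θ 5 - θ 0) := by
    have := hlo 0; have := hhi 5; linarith
  have h1' : 2*Real.pi - (θ 5 - θ 0) ≤ Real.pi/3 := by linarith
  have := myCosHalf h0' h1'
  rw [← heq] at this
  linarith

lemma myNbhdUnique {α : Type*} [MetricSpace α] {P : Finset α} {v : α} {s : ℕ} {N N' : Finset α}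
    (h : IsNbhd P v s N) (h' : IsNbhd P v s N') : N = N' := by
  by_contra hne
  have hcard : N.card = N'.card := by rw [h.2.2.1, h'.2.2.1]
  have h1 : ¬ (N ⊆ N') := by
    intro hsub
    exact hne (Finset.eq_of_subset_of_card_le hsub hcard.ge)
  have h2 : ¬ (N' ⊆ N) := by
    intro hsub
    exact hne (Finset.eq_of_subset_of_card_le hsub hcard.le).symm
  obtain ⟨a, haN, haN'⟩ := Finset.not_subset.mp h1
  obtain ⟨b, hbN', hbN⟩ := Finset.not_subset.mp h2
  have e1 : dist v a < dist v b := h.2.2.2 a haN b (h'.1 hbN') hbN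
  have e2 : dist v b < dist v a := h'.2.2.2 b hbN' a (h.1 haN) haN'
  linarith

def myS (P : Finset ℂ) (p : ℂ) : Finset ℂ :=
  P.filter (fun v => v ≠ p ∧ ∃ N, IsNbhd P v 2 N ∧ p ∈ N)

noncomputable def myN (P : Finset ℂ) (v : ℂ) : Finset ℂ :=
  if h : ∃ N, IsNbhd P v 2 N then h.choose else ∅

def myX (P : Finset ℂ) (p v : ℂ) : Finset ℂ := ((myN P v).erase p).erase v

def myA (p u w : ℂ) : Prop := 1/2 ≤ Real.cos ((u - p).arg - (w - p).arg)

noncomputable def myR (P : Finset ℂ) (p : ℂ) : Finset ℂ :=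
  (myS P p).filter (fun w => ∀ v ∈ myS P p, v ≠ w → dist p v < dist p w → ¬ myA p v w)

lemma myN_spec {P : Finset ℂ} {v : ℂ} (h : ∃ N, IsNbhd P v 2 N) : IsNbhd P v 2 (myN P v) := by
  rw [myN, dif_pos h]
  exact h.choose_spec

lemma myN_eq {P : Finset ℂ} {v : ℂ} {N : Finset ℂ} (h : IsNbhd P v 2 N) : myN P v = N :=
  myNbhdUnique (myN_spec ⟨N, h⟩) h

lemma myS_mem {P : Finset ℂ} {p v : ℂ} :
    v ∈ myS P p ↔ v ∈ P ∧ v ≠ p ∧ ∃ N, IsNbhd P v 2 N ∧ p ∈ N := by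
  simp [myS, Finset.mem_filter, and_assoc]

lemma myS_nbhd {P : Finset ℂ} {p v : ℂ} (h : v ∈ myS P p) :
    IsNbhd P v 2 (myN P v) ∧ p ∈ myN P v := by
  obtain ⟨_, _, N, hN, hpN⟩ := myS_mem.mp h
  rw [myN_eq hN]
  exact ⟨hN, hpN⟩

lemma myS_subset {P : Finset ℂ} {p : ℂ} : myS P p ⊆ P := Finset.filter_subset _ _

lemma myS_ne {P : Finset ℂ} {p v : ℂ} (h : v ∈ myS P p) : v ≠ p := (myS_mem.mp h).2.1

lemma myDistInj {P : Finset ℂ} {p : ℂ} (hd : DistinctDistances P) (hp : p ∈ P)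
    {a b : ℂ} (ha : a ∈ P) (hb : b ∈ P) (hap : a ≠ p) (hbp : b ≠ p) (hab : a ≠ b) :
    dist p a ≠ dist p b := by
  apply hd p hp a ha p hp b hb (Ne.symm hap) (Ne.symm hbp)
  rintro (⟨-, h⟩ | ⟨h, -⟩)
  · exact hab h
  · exact hbp h.symm

lemma myA_symm {p u w : ℂ} (h : myA p u w) : myA p w u := by
  unfold myA at *
  rwa [← Real.cos_neg, neg_sub]

lemma myKSL {P : Finset ℂ} {p : ℂ} (hd : DistinctDistances P) (hp : p ∈ P)
    {w u : ℂ} (hw : w ∈ myS P p) (hu : u ∈ P) (hup : u ≠ p) (huw : u ≠ w)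
    (hdist : dist p u < dist p w) (hA : myA p u w) : myN P w = {w, p, u} := by
  obtain ⟨hN, hpN⟩ := myS_nbhd hw
  obtain ⟨hNP, hwN, hcard, hmin⟩ := hN
  have hwp : w ≠ p := myS_ne hw
  have hlt : dist w u < dist w p := by
    have hlt' : ‖u - p‖ < ‖w - p‖ := by
      have h1 : dist u p < dist w p := by rwa [dist_comm p u, dist_comm p w] at hdist
      rwa [Complex.dist_eq, Complex.dist_eq] at h1
    have h2 := myKeyLt (sub_ne_zero.mpr hup) hA hlt'
    rw [show (u - p) - (w - p) = u - w by ring] at h2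
    rw [dist_comm w u, Complex.dist_eq, Complex.dist_eq]
    exact h2
  have huN : u ∈ myN P w := by
    by_contra hun
    have := hmin p hpN u hu hun
    linarith
  have hsub : ({w, p, u} : Finset ℂ) ⊆ myN P w := by
    intro x hx
    simp only [Finset.mem_insert, Finset.mem_singleton] at hx
    rcases hx with rfl | rfl | rfl
    · exact hwN
    · exact hpN
    · exact huN
  have hc3 : ({w, p, u} : Finset ℂ).card = 3 := by
    rw [Finset.card_insert_of_notMem (by simp [hwp, Ne.symm huw]),
      Finset.card_insert_of_notMem (by simp [Ne.symm hup]), Finset.card_singleton]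
  exact (Finset.eq_of_subset_of_card_le hsub (by rw [hcard, hc3])).symm

lemma myD2 {P : Finset ℂ} {p : ℂ} (hd : DistinctDistances P) (hp : p ∈ P)
    {w u1 u2 : ℂ} (hw : w ∈ myS P p) (h1 : u1 ∈ P) (h2 : u2 ∈ P) (h1p : u1 ≠ p) (h2p : u2 ≠ p)
    (h1w : u1 ≠ w) (h2w : u2 ≠ w) (h12 : u1 ≠ u2)
    (d1 : dist p u1 < dist p w) (d2 : dist p u2 < dist p w)
    (a1 : myA p u1 w) (a2 : myA p u2 w) : False := by
  have e1 := myKSL hd hp hw h1 h1p h1w d1 a1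
  have e2 := myKSL hd hp hw h2 h2p h2w d2 a2
  rw [e1] at e2
  have : u1 ∈ ({w, p, u2} : Finset ℂ) := by rw [← e2]; simp
  simp only [Finset.mem_insert, Finset.mem_singleton] at this
  rcases this with h | h | h
  · exact h1w h
  · exact h1p h
  · exact h12 h

lemma myTri {P : Finset ℂ} {p : ℂ} (hd : DistinctDistances P) (hp : p ∈ P)
    {a b c : ℂ} (ha : a ∈ myS P p) (hb : b ∈ myS P p) (hc : c ∈ myS P p)
    (hab : a ≠ b) (hac : a ≠ c) (hbc : b ≠ c)
    (cab : myA p a b) (cbc : myA p b c) (cac : myA p a c) : False := by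
  have haP := myS_subset ha; have hbP := myS_subset hb; have hcP := myS_subset hc
  have hap := myS_ne ha; have hbp := myS_ne hb; have hcp := myS_ne hc
  have nab := myDistInj hd hp haP hbP hap hbp hab
  have nac := myDistInj hd hp haP hcP hap hcp hac
  have nbc := myDistInj hd hp hbP hcP hbp hcp hbc
  rcases lt_or_gt_of_ne nab with h1 | h1
  · rcases lt_or_gt_of_ne nbc with h2 | h2
    · exact myD2 hd hp hc haP hbP hap hbp hac hbc hab (lt_trans h1 h2) h2 cac cbc
    · exact myD2 hd hp hb haP hcP hap hcp hab (Ne.symm hbc) hac h1 h2 cab (myA_symm cbc)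
  · rcases lt_or_gt_of_ne nac with h2 | h2
    · exact myD2 hd hp hc haP hbP hap hbp hac hbc hab h2 (lt_trans h1 h2) cac cbc
    · exact myD2 hd hp ha hbP hcP hbp hcp (Ne.symm hab) (Ne.symm hac) hbc h1 h2
        (myA_symm cab) (myA_symm cac)

def myIdx (n : ℤ) : Fin 11 := ⟨(n % 11).toNat, by omega⟩

noncomputable def myTheta (p : ℂ) (e : Fin 11 → ℂ) (n : ℤ) : ℝ :=
  (e (myIdx n) - p).arg + 2 * Real.pi * ((n / 11 : ℤ) : ℝ)

noncomputable def myG (p : ℂ) (e : Fin 11 → ℂ) (n : ℤ) : ℝ :=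
  myTheta p e (n + 1) - myTheta p e n

lemma myIdx_eq {m n : ℤ} (h : m % 11 = n % 11) : myIdx m = myIdx n := by
  simp only [myIdx, h]

lemma myIdx_inj {m n : ℤ} (h : myIdx m = myIdx n) : m % 11 = n % 11 := by
  have := congrArg Fin.val h
  simp only [myIdx] at this
  omega

lemma myTheta_step (p : ℂ) (e : Fin 11 → ℂ) (hmono : Monotone (fun i => (e i - p).arg))
    (n : ℤ) : myTheta p e n ≤ myTheta p e (n + 1) := by
  have hpi := Real.pi_pos
  by_cases hr : n % 11 = 10
  · have hq : (n + 1) / 11 = n / 11 + 1 := by omega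
    have hr' : (n + 1) % 11 = 0 := by omega
    have hlo : -Real.pi < (e (myIdx (n+1)) - p).arg := Complex.neg_pi_lt_arg _
    have hhi : (e (myIdx n) - p).arg ≤ Real.pi := Complex.arg_le_pi _
    simp only [myTheta, hq]
    push_cast
    linarith
  · have hq : (n + 1) / 11 = n / 11 := by omega
    have hr' : (n + 1) % 11 = n % 11 + 1 := by omega
    have hle : myIdx n ≤ myIdx (n + 1) := by
      simp only [myIdx, Fin.mk_le_mk, hr']
      omega
    have := hmono hle
    simp only [myTheta, hq]
    simp only at this
    linarith

lemma myTheta_per (p : ℂ) (e : Fin 11 → ℂ) (n : ℤ) :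
    myTheta p e (n + 11) = myTheta p e n + 2 * Real.pi := by
  have h1 : myIdx (n + 11) = myIdx n := myIdx_eq (by omega)
  have h2 : (n + 11) / 11 = n / 11 + 1 := by omega
  simp only [myTheta, h1, h2]
  push_cast
  ring

lemma myTheta_cos (p : ℂ) (e : Fin 11 → ℂ) (m n : ℤ) :
    Real.cos (myTheta p e m - myTheta p e n) =
      Real.cos ((e (myIdx m) - p).arg - (e (myIdx n) - p).arg) := by
  have h : myTheta p e m - myTheta p e n =
      ((e (myIdx m) - p).arg - (e (myIdx n) - p).arg) + (m / 11 - n / 11 : ℤ) * (2 * Real.pi) := by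
    simp only [myTheta]
    push_cast
    ring
  rw [h, Real.cos_add_int_mul_two_pi]

lemma myPairA (p : ℂ) (e : Fin 11 → ℂ) (m n : ℤ)
    (h0 : 0 ≤ myTheta p e n - myTheta p e m) (h1 : myTheta p e n - myTheta p e m ≤ Real.pi / 3) :
    myA p (e (myIdx m)) (e (myIdx n)) := by
  unfold myA
  have hc : Real.cos (myTheta p e n - myTheta p e m) =
      Real.cos ((e (myIdx m) - p).arg - (e (myIdx n) - p).arg) := by
    rw [← myTheta_cos p e m n, ← Real.cos_neg (myTheta p e n - myTheta p e m)]
    congr 1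
    ring
  rw [← hc]
  exact myCosHalf h0 h1

lemma myR5 {P : Finset ℂ} {p : ℂ} (hd : DistinctDistances P) (hp : p ∈ P) :
    (myR P p).card ≤ 5 := by
  by_contra hcon
  push_neg at hcon
  obtain ⟨R6, hR6sub, hR6⟩ := Finset.exists_subset_card_eq (show 6 ≤ (myR P p).card by omega)
  have pairlem : ∀ u w, u ∈ myR P p → w ∈ myR P p → u ≠ w →
      Real.cos ((u - p).arg - (w - p).arg) < 1/2 := by
    intro u w hu hw huw
    have huS : u ∈ myS P p := Finset.filter_subset _ _ hu
    have hwS : w ∈ myS P p := Finset.filter_subset _ _ hw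
    have hne := myDistInj hd hp (myS_subset huS) (myS_subset hwS) (myS_ne huS) (myS_ne hwS) huw
    rcases lt_or_gt_of_ne hne with h | h
    · have h2 := (Finset.mem_filter.mp hw).2 u huS huw h
      unfold myA at h2
      exact not_le.mp h2
    · have h2 := (Finset.mem_filter.mp hu).2 w hwS (Ne.symm huw) h
      unfold myA at h2
      have h3 := not_le.mp h2
      calc Real.cos ((u - p).arg - (w - p).arg)
          = Real.cos ((w - p).arg - (u - p).arg) := by rw [← Real.cos_neg]; congr 1; ring
        _ < 1/2 := h3
  have injang : Set.InjOn (fun v => (v - p).arg) R6 := by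
    intro u hu w hw h
    by_contra hne
    have h2 := pairlem u w (hR6sub hu) (hR6sub hw) hne
    simp only at h
    rw [h, sub_self, Real.cos_zero] at h2
    linarith
  have hQ6 : (R6.image (fun v => (v - p).arg)).card = 6 := by
    rw [Finset.card_image_of_injOn injang, hR6]
  set Q : Finset ℝ := R6.image (fun v => (v - p).arg) with hQ
  set θ : Fin 6 → ℝ := fun i => ((Q.orderIsoOfFin hQ6 i : ℝ)) with hθ
  have hmono : StrictMono θ := by
    intro i j hij
    exact Subtype.coe_lt_coe.mpr ((Q.orderIsoOfFin hQ6).strictMono hij)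
  have hex : ∀ i, ∃ v ∈ R6, (v - p).arg = θ i := by
    intro i
    have h2 : θ i ∈ Q := (Q.orderIsoOfFin hQ6 i).2
    rw [hQ] at h2
    simpa [Finset.mem_image] using h2
  apply mySix θ hmono ?_ ?_ ?_
  · intro i; obtain ⟨v, -, hv⟩ := hex i; rw [← hv]; exact Complex.neg_pi_lt_arg _
  · intro i; obtain ⟨v, -, hv⟩ := hex i; rw [← hv]; exact Complex.arg_le_pi _
  · intro i j hij
    obtain ⟨u, huR, hu⟩ := hex i
    obtain ⟨w, hwR, hw⟩ := hex j
    have hne : u ≠ w := by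
      intro h
      exact hmono.injective.ne hij (by rw [← hu, ← hw, h])
    rw [← hu, ← hw]
    exact pairlem u w (hR6sub huR) (hR6sub hwR) hne

lemma myS10 {P : Finset ℂ} {p : ℂ} (hd : DistinctDistances P) (hp : p ∈ P) :
    (myS P p).card ≤ 10 := by
  by_contra hcon
  push_neg at hcon
  obtain ⟨X, hXS, hX11⟩ := Finset.exists_subset_card_eq (show 11 ≤ (myS P p).card by omega)
  have hpi := Real.pi_pos
  set q0 : {x // x ∈ X} ≃ Fin 11 := Finset.equivFinOfCardEq hX11 with hq0
  set e0 : Fin 11 → ℂ := fun i => (q0.symm i : ℂ) with he0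
  have he0inj : Function.Injective e0 := by
    intro i j h
    exact q0.symm.injective (Subtype.ext h)
  have he0X : ∀ i, e0 i ∈ X := fun i => (q0.symm i).2
  set σ := Tuple.sort (fun i => (e0 i - p).arg) with hσ
  set e : Fin 11 → ℂ := fun i => e0 (σ i) with he
  have heinj : Function.Injective e := he0inj.comp σ.injective
  have heX : ∀ i, e i ∈ X := fun i => he0X (σ i)
  have heS : ∀ i, e i ∈ myS P p := fun i => hXS (heX i)
  have heP : ∀ i, e i ∈ P := fun i => myS_subset (heS i)
  have henp : ∀ i, e i ≠ p := fun i => myS_ne (heS i)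
  have hmono : Monotone (fun i => (e i - p).arg) := by
    have h2 := Tuple.monotone_sort (fun i => (e0 i - p).arg)
    exact h2
  have hGnn : ∀ n : ℤ, 0 ≤ myG p e n := fun n => sub_nonneg.mpr (myTheta_step p e hmono n)
  have C1 : ∀ n : ℤ, Real.pi / 3 < myG p e n + myG p e (n + 1) := by
    intro n
    by_contra hc
    push_neg at hc
    have g1 := hGnn n
    have g2 := hGnn (n + 1)
    have hG1 : myG p e n = myTheta p e (n+1) - myTheta p e n := rfl
    have hG2 : myG p e (n+1) = myTheta p e (n+2) - myTheta p e (n+1) := by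
      rw [show n+2 = n+1+1 by ring]
      rfl
    have Aab : myA p (e (myIdx n)) (e (myIdx (n+1))) :=
      myPairA p e n (n+1) (by linarith) (by linarith)
    have Abc : myA p (e (myIdx (n+1))) (e (myIdx (n+2))) :=
      myPairA p e (n+1) (n+2) (by linarith) (by linarith)
    have Aac : myA p (e (myIdx n)) (e (myIdx (n+2))) :=
      myPairA p e n (n+2) (by linarith) (by linarith)
    have i01 : myIdx n ≠ myIdx (n+1) := fun h => by have := myIdx_inj h; omega
    have i12 : myIdx (n+1) ≠ myIdx (n+2) := fun h => by have := myIdx_inj h; omega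
    have i02 : myIdx n ≠ myIdx (n+2) := fun h => by have := myIdx_inj h; omega
    exact myTri hd hp (heS _) (heS _) (heS _)
      (fun h => i01 (heinj h)) (fun h => i02 (heinj h)) (fun h => i12 (heinj h)) Aab Abc Aac
  obtain ⟨m0, hm0X, hmax⟩ := X.exists_max_image (fun z => dist p z) ⟨e 0, heX 0⟩
  have hm0S : m0 ∈ myS P p := hXS hm0X
  obtain ⟨i0, hi0⟩ : ∃ i, e i = m0 := by
    obtain ⟨j, hj⟩ := q0.symm.surjective ⟨m0, hm0X⟩
    refine ⟨σ.symm j, ?_⟩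
    simp only [he, he0, Equiv.apply_symm_apply]
    rw [hj]
  have hstrict : ∀ i, e i ≠ m0 → dist p (e i) < dist p m0 := by
    intro i hne
    exact lt_of_le_of_ne (hmax (e i) (heX i))
      (myDistInj hd hp (heP i) (myS_subset hm0S) (henp i) (myS_ne hm0S) hne)
  have hBig : ∃ b : ℤ, Real.pi / 3 < myG p e b := by
    by_contra hc
    push_neg at hc
    set n : ℤ := (i0.val : ℤ) with hn
    have hidx : myIdx n = i0 := by
      apply Fin.ext
      have := i0.isLt
      simp only [myIdx]
      omega
    have hm0e : m0 = e (myIdx n) := by rw [hidx, hi0]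
    have hGm : myG p e (n-1) = myTheta p e (n-1+1) - myTheta p e (n-1) := rfl
    rw [show n-1+1 = n by ring] at hGm
    have hGn : myG p e n = myTheta p e (n+1) - myTheta p e n := rfl
    have A1 : myA p (e (myIdx (n-1))) m0 := by
      rw [hm0e]
      exact myPairA p e (n-1) n (by linarith [hGnn (n-1)]) (by linarith [hc (n-1)])
    have A2 : myA p (e (myIdx (n+1))) m0 := by
      rw [hm0e]
      apply myA_symm
      exact myPairA p e n (n+1) (by linarith [hGnn n, hGn]) (by linarith [hc n, hGn])
    have i1 : myIdx (n-1) ≠ myIdx n := fun h => by have := myIdx_inj h; omega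
    have i2 : myIdx (n+1) ≠ myIdx n := fun h => by have := myIdx_inj h; omega
    have i12 : myIdx (n-1) ≠ myIdx (n+1) := fun h => by have := myIdx_inj h; omega
    have ne1 : e (myIdx (n-1)) ≠ m0 := by
      rw [hm0e]; exact fun h => i1 (heinj h)
    have ne2 : e (myIdx (n+1)) ≠ m0 := by
      rw [hm0e]; exact fun h => i2 (heinj h)
    have ne12 : e (myIdx (n-1)) ≠ e (myIdx (n+1)) := fun h => i12 (heinj h)
    exact myD2 hd hp hm0S (heP _) (heP _) (henp _) (henp _) ne1 ne2 ne12
      (hstrict _ ne1) (hstrict _ ne2) A1 A2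
  obtain ⟨b, hb⟩ := hBig
  have tele : ∑ k ∈ Finset.range 11, myG p e (b + (k:ℤ)) = 2 * Real.pi := by
    have h1 : ∀ k ∈ Finset.range 11, myG p e (b + (k:ℤ)) =
        (fun k : ℕ => myTheta p e (b + (k:ℤ))) (k+1) - (fun k : ℕ => myTheta p e (b + (k:ℤ))) k := by
      intro k _
      simp only [myG]
      congr 2
      push_cast
      ring
    rw [Finset.sum_congr rfl h1, Finset.sum_range_sub (fun k : ℕ => myTheta p e (b + (k:ℤ))) 11]
    simp only [Nat.cast_ofNat, Nat.cast_zero, add_zero]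
    rw [myTheta_per]
    ring
  have texp : myG p e b + myG p e (b+1) + myG p e (b+2) + myG p e (b+3) + myG p e (b+4) +
      myG p e (b+5) + myG p e (b+6) + myG p e (b+7) + myG p e (b+8) + myG p e (b+9) +
      myG p e (b+10) = 2 * Real.pi := by
    have h2 := tele
    simp only [Finset.sum_range_succ, Finset.sum_range_zero] at h2
    push_cast at h2
    simp only [add_zero, zero_add] at h2
    linarith
  have E1 : Real.pi/3 < myG p e (b+1) + myG p e (b+2) := by
    have := C1 (b+1); rwa [show b+1+1 = b+2 by ring] at this
  have E3 : Real.pi/3 < myG p e (b+3) + myG p e (b+4) := by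
    have := C1 (b+3); rwa [show b+3+1 = b+4 by ring] at this
  have E5 : Real.pi/3 < myG p e (b+5) + myG p e (b+6) := by
    have := C1 (b+5); rwa [show b+5+1 = b+6 by ring] at this
  have E7 : Real.pi/3 < myG p e (b+7) + myG p e (b+8) := by
    have := C1 (b+7); rwa [show b+7+1 = b+8 by ring] at this
  have E9 : Real.pi/3 < myG p e (b+9) + myG p e (b+10) := by
    have := C1 (b+9); rwa [show b+9+1 = b+10 by ring] at this
  linarith

lemma myGPadj {α : Type*} [MetricSpace α] {P : Finset α} {a b : α} :
    (GP P).Adj a b ↔ a ≠ b ∧ ∃ v ∈ P, ∃ N : Finset α, IsNbhd P v 2 N ∧ a ∈ N ∧ b ∈ N :=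
  Iff.rfl

theorem myCore (P : Finset ℂ) (hd : DistinctDistances P) (p : ℂ) (hp : p ∈ P) :
    ({q | (GP P).Adj p q}).ncard ≤ 17 := by
  classical
  set T : Finset ℂ :=
    ((myN P p).erase p) ∪ (myS P p ∪ (myR P p).biUnion (fun w => myX P p w)) with hT
  have hsub : {q | (GP P).Adj p q} ⊆ (T : Set ℂ) := by
    intro q hq
    obtain ⟨hpq, v, hvP, N, hN, hpN, hqN⟩ := myGPadj.mp hq
    have hmemT : q ∈ T := by
      rw [hT]
      rw [Finset.mem_union, Finset.mem_union]
      by_cases hvp : v = p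
      · subst hvp
        left
        exact Finset.mem_erase.mpr ⟨Ne.symm hpq, (myN_eq hN) ▸ hqN⟩
      · have hvS : v ∈ myS P p := myS_mem.mpr ⟨hvP, hvp, N, hN, hpN⟩
        have hNv : myN P v = N := myN_eq hN
        by_cases hqv : q = v
        · right; left; subst hqv; exact hvS
        · have hqX : q ∈ myX P p v := by
            unfold myX
            rw [hNv]
            exact Finset.mem_erase.mpr ⟨hqv, Finset.mem_erase.mpr ⟨Ne.symm hpq, hqN⟩⟩
          by_cases hvR : v ∈ myR P p
          · right; right
            exact Finset.mem_biUnion.mpr ⟨v, hvR, hqX⟩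
          · have hvnR : ∃ u ∈ myS P p, u ≠ v ∧ dist p u < dist p v ∧ myA p u v := by
              rw [myR, Finset.mem_filter] at hvR
              push_neg at hvR
              obtain ⟨u, huS, huv, hud, huA⟩ := hvR hvS
              exact ⟨u, huS, huv, hud, huA⟩
            obtain ⟨u, huS, huv, hud, huA⟩ := hvnR
            have hKey := myKSL hd hp hvS (myS_subset huS) (myS_ne huS) huv hud huA
            have hq' : q = u := by
              have hqmem : q ∈ myN P v := hNv ▸ hqN
              rw [hKey] at hqmem
              simp only [Finset.mem_insert, Finset.mem_singleton] at hqmem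
              rcases hqmem with h | h | h
              · exact absurd h hqv
              · exact absurd h (Ne.symm hpq)
              · exact h
            right; left
            rw [hq']
            exact huS
    exact hmemT
  have h1 : ({q | (GP P).Adj p q}).ncard ≤ T.card := by
    have h2 := Set.ncard_le_ncard hsub T.finite_toSet
    rwa [Set.ncard_coe_finset] at h2
  refine le_trans h1 ?_
  have c1 : ((myN P p).erase p).card ≤ 2 := by
    by_cases h : ∃ N, IsNbhd P p 2 N
    · have hNp := myN_spec h
      rw [Finset.card_erase_of_mem hNp.2.1, hNp.2.2.1]
    · rw [myN, dif_neg h]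
      simp
  have c2 : (myS P p).card ≤ 10 := myS10 hd hp
  have c3 : ((myR P p).biUnion (fun w => myX P p w)).card ≤ 5 := by
    refine le_trans Finset.card_biUnion_le ?_
    have each : ∀ w ∈ myR P p, (myX P p w).card ≤ 1 := by
      intro w hw
      have hwS : w ∈ myS P p := Finset.filter_subset _ _ hw
      obtain ⟨hNw, hpNw⟩ := myS_nbhd hwS
      have hwN : w ∈ myN P w := hNw.2.1
      have hwp : w ≠ p := myS_ne hwS
      have hpe : p ∈ (myN P w).erase w := Finset.mem_erase.mpr ⟨Ne.symm hwp, hpNw⟩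
      unfold myX
      have h4 : ((myN P w).erase p).card = 2 := by
        rw [Finset.card_erase_of_mem hpNw, hNw.2.2.1]
      have h5 : (((myN P w).erase p).erase w).card = 1 := by
        rw [Finset.card_erase_of_mem (Finset.mem_erase.mpr ⟨hwp, hwN⟩), h4]
      omega
    calc ∑ w ∈ myR P p, (myX P p w).card ≤ ∑ _w ∈ myR P p, 1 := Finset.sum_le_sum each
      _ = (myR P p).card := by simp
      _ ≤ 5 := myR5 hd hp
  calc T.card ≤ ((myN P p).erase p).card +
        (myS P p ∪ (myR P p).biUnion (fun w => myX P p w)).card := Finset.card_union_le _ _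
    _ ≤ ((myN P p).erase p).card + ((myS P p).card +
        ((myR P p).biUnion (fun w => myX P p w)).card) :=
        Nat.add_le_add_left (Finset.card_union_le _ _) _
    _ ≤ 2 + (10 + 5) := by omega
    _ = 17 := by norm_num

lemma myNbhdImage {E F : Type*} [MetricSpace E] [MetricSpace F] (f : E ≃ F)
    (hf : ∀ x y, dist (f x) (f y) = dist x y) {P N : Finset E} {v : E} {s : ℕ}
    (h : IsNbhd P v s N) : IsNbhd (P.image f) (f v) s (N.image f) := by
  obtain ⟨h1, h2, h3, h4⟩ := h
  refine ⟨Finset.image_subset_image h1, Finset.mem_image_of_mem _ h2,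
    by rw [Finset.card_image_of_injective _ f.injective, h3], ?_⟩
  intro a' ha' b' hb' hb'n
  obtain ⟨a, haN, rfl⟩ := Finset.mem_image.mp ha'
  obtain ⟨b, hbP, rfl⟩ := Finset.mem_image.mp hb'
  have hbN : b ∉ N := fun hbN => hb'n (Finset.mem_image_of_mem _ hbN)
  rw [hf, hf]
  exact h4 a haN b hbP hbN

lemma myGPadjImage {E F : Type*} [MetricSpace E] [MetricSpace F] (f : E ≃ F)
    (hf : ∀ x y, dist (f x) (f y) = dist x y) (P : Finset E) (a b : E) :
    (GP (P.image f)).Adj (f a) (f b) ↔ (GP P).Adj a b := by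
  rw [myGPadj, myGPadj]
  constructor
  · rintro ⟨hne, v', hv', N', hN', ha', hb'⟩
    have hf' : ∀ x y : F, dist (f.symm x) (f.symm y) = dist x y := by
      intro x y
      rw [← hf (f.symm x) (f.symm y)]
      simp
    have himg : (P.image f).image f.symm = P := by
      rw [Finset.image_image]
      simp
    have h2 := myNbhdImage f.symm hf' hN'
    rw [himg] at h2
    refine ⟨fun h => hne (congrArg f h), f.symm v', ?_, N'.image f.symm, h2, ?_, ?_⟩
    · obtain ⟨v, hvP, rfl⟩ := Finset.mem_image.mp hv'
      simpa using hvP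
    · refine Finset.mem_image.mpr ⟨f a, ha', by simp⟩
    · refine Finset.mem_image.mpr ⟨f b, hb', by simp⟩
  · rintro ⟨hne, v, hv, N, hN, ha, hb⟩
    exact ⟨fun h => hne (f.injective h), f v, Finset.mem_image_of_mem _ hv, N.image f,
      myNbhdImage f hf hN, Finset.mem_image_of_mem _ ha, Finset.mem_image_of_mem _ hb⟩

lemma myDDImage {E F : Type*} [MetricSpace E] [MetricSpace F] (f : E ≃ F)
    (hf : ∀ x y, dist (f x) (f y) = dist x y) {P : Finset E} (hd : DistinctDistances P) :
    DistinctDistances (P.image f) := by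
  intro a' ha' b' hb' c' hc' d' hd' hab hcd hne
  obtain ⟨a, haP, rfl⟩ := Finset.mem_image.mp ha'
  obtain ⟨b, hbP, rfl⟩ := Finset.mem_image.mp hb'
  obtain ⟨c, hcP, rfl⟩ := Finset.mem_image.mp hc'
  obtain ⟨d, hdP, rfl⟩ := Finset.mem_image.mp hd'
  rw [hf, hf]
  apply hd a haP b hbP c hcP d hdP (fun h => hab (congrArg f h)) (fun h => hcd (congrArg f h))
  rintro (⟨h1, h2⟩ | ⟨h1, h2⟩)
  · exact hne (Or.inl ⟨congrArg f h1, congrArg f h2⟩)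
  · exact hne (Or.inr ⟨congrArg f h1, congrArg f h2⟩)

/-- Every vertex of the graph `G_P` of a planar point set with pairwise distinct
distances has degree at most `17`. -/
theorem GP_degree_le_17 (P : Finset (EuclideanSpace ℝ (Fin 2)))
    (hd : DistinctDistances P) :
    ∀ p ∈ P, ({q | (GP P).Adj p q} : Set (EuclideanSpace ℝ (Fin 2))).ncard ≤ 17 := by
  intro p hp
  set li : ℂ ≃ₗᵢ[ℝ] EuclideanSpace ℝ (Fin 2) :=
    Complex.isometryOfOrthonormal (EuclideanSpace.basisFun (Fin 2) ℝ) with hli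
  set g : EuclideanSpace ℝ (Fin 2) ≃ ℂ := li.symm.toLinearEquiv.toEquiv with hg
  have hdist : ∀ x y, dist (g x) (g y) = dist x y := by
    intro x y
    exact li.symm.dist_map x y
  have himg : {q' | (GP (P.image g)).Adj (g p) q'} = ⇑g '' {q | (GP P).Adj p q} := by
    ext q'
    simp only [Set.mem_image, Set.mem_setOf_eq]
    constructor
    · intro h
      refine ⟨g.symm q', ?_, by simp⟩
      have h2 : q' = g (g.symm q') := by simp
      rw [h2] at h
      exact (myGPadjImage g hdist P p _).mp h
    · rintro ⟨q, hq, rfl⟩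
      exact (myGPadjImage g hdist P p q).mpr hq
  have hcore := myCore (P.image g) (myDDImage g hdist hd) (g p) (Finset.mem_image_of_mem g hp)
  rw [himg, Set.ncard_image_of_injective _ g.injective] at hcore
  exact hcore
end
end

section
/- Let P be a finite set of points in the Euclidean plane ℝ² with all pairwise distances between distinct pairs of points distinct, and let p ∈ P. Define S_1 = {v ∈ P : n_1(v) = p or n_2(v) = p} and S_2 = {n_1(p), n_2(p)} (assuming |P| ≥ 3 so these exist). Then |S_1 ∪ S_2| ≤ 12. -/
open scoped Classical

noncomputable section S1S2Aux

open Real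

/-- map from the Euclidean plane to ℂ -/
def toC (x : EuclideanSpace ℝ (Fin 2)) : ℂ := ⟨x 0, x 1⟩

lemma abs_toC (x : EuclideanSpace ℝ (Fin 2)) : ‖(toC x)‖ = ‖x‖ := by
  rw [Complex.norm_def, Complex.normSq_apply, EuclideanSpace.norm_eq]
  simp only [Fin.sum_univ_two, Real.norm_eq_abs, sq_abs]
  congr 1
  simp [toC]
  ring

lemma toC_sub (a b : EuclideanSpace ℝ (Fin 2)) : toC (a - b) = toC a - toC b := by
  apply Complex.ext <;> simp [toC]

lemma dist_toC (a b : EuclideanSpace ℝ (Fin 2)) :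
    dist a b = ‖(toC a - toC b)‖ := by
  rw [← toC_sub, abs_toC, dist_eq_norm]

/-- key geometric lemma in ℂ -/
lemma key_abs (a b : ℂ) (ha : a ≠ 0) (hb : b ≠ 0)
    (hang : |a.arg - b.arg| ≤ π/3) (hlt : ‖b‖ < ‖a‖) :
    ‖(a - b)‖ < ‖a‖ := by
  have hpi := Real.pi_pos
  have hcos : (1:ℝ)/2 ≤ Real.cos (a.arg - b.arg) := by
    rw [← Real.cos_abs]
    have h := Real.cos_le_cos_of_nonneg_of_le_pi (abs_nonneg (a.arg - b.arg))
      (by linarith : π/3 ≤ π) hang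
    rwa [Real.cos_pi_div_three] at h
  have hA := Complex.norm_mul_cos_arg a
  have hAi := Complex.norm_mul_sin_arg a
  have hB := Complex.norm_mul_cos_arg b
  have hBi := Complex.norm_mul_sin_arg b
  have hb0 : 0 < ‖b‖ := norm_pos_iff.mpr hb
  have ha0 : 0 < ‖a‖ := norm_pos_iff.mpr ha
  have hinner : ‖a‖ * ‖b‖ * (1/2) ≤ a.re * b.re + a.im * b.im := by
    have heq : a.re * b.re + a.im * b.im
        = ‖a‖ * ‖b‖ * Real.cos (a.arg - b.arg) := by
      rw [Real.cos_sub, ← hA, ← hAi, ← hB, ← hBi]; ring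
    rw [heq]
    have := mul_le_mul_of_nonneg_left hcos
      (by positivity : (0:ℝ) ≤ ‖a‖ * ‖b‖)
    linarith
  have hA2 : (‖a‖)^2 = a.re*a.re + a.im*a.im := by
    rw [Complex.sq_norm, Complex.normSq_apply]
  have hB2 : (‖b‖)^2 = b.re*b.re + b.im*b.im := by
    rw [Complex.sq_norm, Complex.normSq_apply]
  have hD2 : (‖(a-b)‖)^2
      = (a.re-b.re)*(a.re-b.re) + (a.im-b.im)*(a.im-b.im) := by
    rw [Complex.sq_norm, Complex.normSq_apply, Complex.sub_re, Complex.sub_im]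
  have hsq : (‖(a-b)‖)^2 < (‖a‖)^2 := by
    nlinarith [mul_pos hb0 (sub_pos.mpr hlt)]
  nlinarith [norm_nonneg (a-b), norm_nonneg a, hsq]

/-- cone coloring -/
def col (z : ℂ) : ℕ := min 5 ⌊(z.arg + π) / (π/3)⌋₊

lemma col_lt_six (z : ℂ) : col z < 6 := by
  have : col z ≤ 5 := min_le_left _ _
  omega

lemma col_bounds (z : ℂ) :
    (col z : ℝ) * (π/3) ≤ z.arg + π ∧ z.arg + π ≤ ((col z : ℝ) + 1) * (π/3) := by
  have hpi := Real.pi_pos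
  have h0 : 0 ≤ z.arg + π := by linarith [Complex.neg_pi_lt_arg z]
  have h2 : z.arg + π ≤ 2*π := by linarith [Complex.arg_le_pi z]
  set t := z.arg + π with ht
  have hu : (0:ℝ) < π/3 := by linarith
  have hfl : (⌊t / (π/3)⌋₊ : ℝ) ≤ t / (π/3) := Nat.floor_le (by positivity)
  by_cases h : ⌊t / (π/3)⌋₊ ≤ 5
  · have hcol : col z = ⌊t/(π/3)⌋₊ := by
      simp only [col, ← ht]
      exact min_eq_right h
    rw [hcol]
    constructor
    · have := (le_div_iff₀ hu).mp hfl
      linarith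
    · have h3 : t / (π/3) < (⌊t/(π/3)⌋₊ : ℝ) + 1 := Nat.lt_floor_add_one _
      have := (div_lt_iff₀ hu).mp h3
      linarith
  · have hcol : col z = 5 := by
      simp only [col, ← ht]
      exact min_eq_left (by omega)
    rw [hcol]
    push_neg at h
    have h5 : (5:ℝ) ≤ (⌊t / (π/3)⌋₊ : ℝ) := by exact_mod_cast Nat.le_of_lt_succ (by omega)
    constructor
    · have : (5:ℝ) ≤ t / (π/3) := le_trans h5 hfl
      have := (le_div_iff₀ hu).mp this
      linarith
    · norm_num; linarith

lemma arg_close {a b : ℂ} (h : col a = col b) : |a.arg - b.arg| ≤ π/3 := by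
  obtain ⟨h1, h2⟩ := col_bounds a
  obtain ⟨h3, h4⟩ := col_bounds b
  rw [h] at h1 h2
  rw [abs_le]
  constructor <;> linarith

end S1S2Aux

/-- For a planar point set `P` with pairwise distinct distances, `|P| ≥ 3` and `p ∈ P`,
the set `S_1 ∪ S_2`, where `S_1 = {v ∈ P : n_1(v) = p ∨ n_2(v) = p}` and
`S_2 = {n_1(p), n_2(p)}`, has at most `12` elements. -/
theorem S1_union_S2_card_le_12 (P : Finset (EuclideanSpace ℝ (Fin 2)))
    (hd : DistinctDistances P) (hP : 3 ≤ P.card)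
    (p : EuclideanSpace ℝ (Fin 2)) (hp : p ∈ P)
    (q1 q2 : EuclideanSpace ℝ (Fin 2))
    (hq1 : IsNearest P p q1) (hq2 : IsSecondNearest P p q2) :
    (({v | v ∈ P ∧ (IsNearest P v p ∨ IsSecondNearest P v p)} ∪ {q1, q2}) :
      Set (EuclideanSpace ℝ (Fin 2))).ncard ≤ 12 := by
  classical
  set T : Finset (EuclideanSpace ℝ (Fin 2)) :=
    (P.filter fun v => IsNearest P v p ∨ IsSecondNearest P v p) ∪ {q1, q2} with hT
  have hset : (({v | v ∈ P ∧ (IsNearest P v p ∨ IsSecondNearest P v p)} ∪ {q1, q2}) :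
      Set (EuclideanSpace ℝ (Fin 2))) = ↑T := by
    ext v
    simp only [hT, Set.mem_union, Set.mem_setOf_eq, Set.mem_insert_iff,
      Set.mem_singleton_iff, Finset.coe_union, Finset.coe_filter,
      Finset.coe_insert, Finset.coe_singleton]
  rw [hset, Set.ncard_coe_finset]
  -- membership properties of T
  have hmem : ∀ v ∈ T, v ∈ P ∧ v ≠ p ∧
      (∀ x ∈ P, ∀ y ∈ P, x ≠ p → y ≠ p → x ≠ v → y ≠ v → x ≠ y →
        dist v x < dist v p → dist v y < dist v p →
        dist p x < dist p v → dist p y < dist p v → False) := by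
    intro v hv
    rw [hT, Finset.mem_union] at hv
    rcases hv with hv | hv
    · rw [Finset.mem_filter] at hv
      obtain ⟨hvP, hcase⟩ := hv
      rcases hcase with ⟨hpP, hpv, hmin⟩ | ⟨u1, hu1, hpP, hpv, hpu1, hmin⟩
      · refine ⟨hvP, Ne.symm hpv, ?_⟩
        intro x hxP y hyP hxp hyp hxv hyv hxy hdx hdy _ _
        exact absurd hdx (not_lt.mpr (le_of_lt (hmin x hxP hxv hxp)))
      · refine ⟨hvP, Ne.symm hpv, ?_⟩
        intro x hxP y hyP hxp hyp hxv hyv hxy hdx hdy _ _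
        by_cases hxu : x = u1
        · have hyu : y ≠ u1 := fun h => hxy (hxu.trans h.symm)
          exact absurd hdy (not_lt.mpr (le_of_lt (hmin y hyP hyv hyu hyp)))
        · exact absurd hdx (not_lt.mpr (le_of_lt (hmin x hxP hxv hxu hxp)))
    · rw [Finset.mem_insert, Finset.mem_singleton] at hv
      rcases hv with rfl | rfl
      · refine ⟨hq1.1, hq1.2.1, ?_⟩
        intro x hxP y hyP hxp hyp hxv hyv hxy hdx hdy hpx hpy
        exact absurd hpx (not_lt.mpr (le_of_lt (hq1.2.2 x hxP hxp hxv)))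
      · obtain ⟨u1, hu1, hq2P, hq2p, hq2u1, hmin⟩ := hq2
        refine ⟨hq2P, hq2p, ?_⟩
        intro x hxP y hyP hxp hyp hxv hyv hxy hdx hdy hpx hpy
        by_cases hxu : x = u1
        · have hyu : y ≠ u1 := fun h => hxy (hxu.trans h.symm)
          exact absurd hpy (not_lt.mpr (le_of_lt (hmin y hyP hyp hyu hyv)))
        · exact absurd hpx (not_lt.mpr (le_of_lt (hmin x hxP hxp hxu hxv)))
  -- distances to p are pairwise distinct on T
  have hdp : ∀ v ∈ T, ∀ x ∈ T, v ≠ x → dist p v ≠ dist p x := by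
    intro v hv x hx hvx
    obtain ⟨hvP, hvp, -⟩ := hmem v hv
    obtain ⟨hxP, hxp, -⟩ := hmem x hx
    refine hd p hp v hvP p hp x hxP (Ne.symm hvp) (Ne.symm hxp) ?_
    rintro (⟨-, h⟩ | ⟨h, -⟩)
    · exact hvx h
    · exact hxp h.symm
  -- the cone property
  have cone : ∀ v ∈ T, ∀ x ∈ T, v ≠ x →
      col (toC v - toC p) = col (toC x - toC p) → dist p x < dist p v →
      dist v x < dist v p := by
    intro v hv x hx hvx hc hlt
    obtain ⟨hvP, hvp, -⟩ := hmem v hv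
    obtain ⟨hxP, hxp, -⟩ := hmem x hx
    have ha : toC v - toC p ≠ 0 := by
      intro h
      have : dist v p = 0 := by rw [dist_toC, h, norm_zero]
      exact hvp (dist_eq_zero.mp this)
    have hb : toC x - toC p ≠ 0 := by
      intro h
      have : dist x p = 0 := by rw [dist_toC, h, norm_zero]
      exact hxp (dist_eq_zero.mp this)
    have habs : ‖(toC x - toC p)‖ < ‖(toC v - toC p)‖ := by
      rw [← dist_toC, ← dist_toC, dist_comm x p, dist_comm v p]
      exact hlt
    have := key_abs _ _ ha hb (arg_close hc) habs
    rw [dist_toC v x, dist_toC v p]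
    have heq : toC v - toC x = (toC v - toC p) - (toC x - toC p) := by ring
    rw [heq]
    exact this
  -- killing triples in one cone
  have kill : ∀ v ∈ T, ∀ x ∈ T, ∀ y ∈ T, v ≠ x → v ≠ y → x ≠ y →
      col (toC v - toC p) = col (toC x - toC p) →
      col (toC v - toC p) = col (toC y - toC p) →
      dist p x < dist p v → dist p y < dist p v → False := by
    intro v hv x hx y hy hvx hvy hxy hcx hcy hltx hlty
    have h1 := cone v hv x hx hvx hcx hltx
    have h2 := cone v hv y hy hvy hcy hlty
    obtain ⟨hvP, hvp, hK⟩ := hmem v hv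
    obtain ⟨hxP, hxp, -⟩ := hmem x hx
    obtain ⟨hyP, hyp, -⟩ := hmem y hy
    exact hK x hxP y hyP hxp hyp (Ne.symm hvx) (Ne.symm hvy) hxy h1 h2 hltx hlty
  -- each cone contains at most 2 points of T
  have fib : ∀ k ∈ Finset.range 6,
      (T.filter (fun v => col (toC v - toC p) = k)).card ≤ 2 := by
    intro k _
    by_contra hgt
    push_neg at hgt
    obtain ⟨a, b, c, haf, hbf, hcf, hab, hac, hbc⟩ := Finset.two_lt_card_iff.mp hgt
    obtain ⟨haT, hak⟩ := Finset.mem_filter.mp haf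
    obtain ⟨hbT, hbk⟩ := Finset.mem_filter.mp hbf
    obtain ⟨hcT, hck⟩ := Finset.mem_filter.mp hcf
    have hcab : col (toC a - toC p) = col (toC b - toC p) := hak.trans hbk.symm
    have hcac : col (toC a - toC p) = col (toC c - toC p) := hak.trans hck.symm
    have hcbc : col (toC b - toC p) = col (toC c - toC p) := hbk.trans hck.symm
    rcases (hdp a haT b hbT hab).lt_or_gt with h1 | h1
    · rcases (hdp b hbT c hcT hbc).lt_or_gt with h2 | h2
      · exact kill c hcT a haT b hbT (Ne.symm hac) (Ne.symm hbc) hab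
          hcac.symm hcbc.symm (h1.trans h2) h2
      · exact kill b hbT a haT c hcT (Ne.symm hab) hbc hac
          hcab.symm hcbc h1 h2
    · rcases (hdp a haT c hcT hac).lt_or_gt with h2 | h2
      · exact kill c hcT a haT b hbT (Ne.symm hac) (Ne.symm hbc) hab
          hcac.symm hcbc.symm h2 (h1.trans h2)
      · exact kill a haT b hbT c hcT hab hac hbc hcab hcac h1 h2
  -- pigeonhole
  have hcard : T.card = ∑ k ∈ Finset.range 6,
      (T.filter (fun v => col (toC v - toC p) = k)).card :=
    Finset.card_eq_sum_card_fiberwise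
      (fun x _ => Finset.mem_range.mpr (col_lt_six (toC x - toC p)))
  rw [hcard]
  calc ∑ k ∈ Finset.range 6, (T.filter (fun v => col (toC v - toC p) = k)).card
      ≤ ∑ _k ∈ Finset.range 6, 2 := Finset.sum_le_sum fib
    _ = 12 := by simp
end

section
/- Let p, x, z be three points in the Euclidean plane ℝ² with x ≠ p and z ≠ p. If dist(p, x) < dist(p, z) and the angle ∠xpz at p is at most 60°, then dist(x, z) < dist(p, z); that is, in the triangle xpz the side pz is strictly the longest side. -/
open scoped Classical

open EuclideanGeometry in
/-- If `dist p x < dist p z` and the angle `∠ x p z` at `p` is at most `60°`, then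
`dist x z < dist p z`; i.e. `pz` is strictly the longest side of the triangle `xpz`. -/
theorem longest_side_of_small_angle (p x z : EuclideanSpace ℝ (Fin 2))
    (hx : x ≠ p) (hz : z ≠ p)
    (h1 : dist p x < dist p z) (h2 : ∠ x p z ≤ Real.pi / 3) :
    dist x z < dist p z := by
  have hcos : (1:ℝ)/2 ≤ Real.cos (∠ x p z) := by
    have := Real.cos_le_cos_of_nonneg_of_le_pi (angle_nonneg x p z)
      (by linarith [Real.pi_pos] : Real.pi / 3 ≤ Real.pi) h2
    rwa [Real.cos_pi_div_three] at this
  have hlc := law_cos x p z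
  have ha : (0:ℝ) < dist x p := dist_pos.2 hx
  have hb : (0:ℝ) < dist z p := dist_pos.2 hz
  rw [dist_comm p x, dist_comm p z] at h1
  rw [dist_comm p z]
  nlinarith [dist_nonneg (x := x) (y := z), mul_le_mul_of_nonneg_left hcos (by positivity : (0:ℝ) ≤ 2 * dist x p * dist z p), mul_lt_mul_of_pos_left h1 ha]
end

section
/- Let P be a finite set of points in the Euclidean plane ℝ² with all pairwise distances between distinct pairs of points distinct, and let p ∈ P. Then at most 5 points v ∈ P \ {p} have p as their nearest neighbor in P; that is, |{v ∈ P \ {p} : n_1(v) = p}| ≤ 5. -/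
open scoped Classical

open Real
lemma abs_toReal_coe_le (d : ℝ) : |((d : Real.Angle)).toReal| ≤ |d| := by
  set t := ((d : Real.Angle)).toReal with ht
  have hcoe : ((t : ℝ) : Real.Angle) = (d : Real.Angle) := Real.Angle.coe_toReal _
  obtain ⟨k, hk⟩ := Real.Angle.angle_eq_iff_two_pi_dvd_sub.mp hcoe
  rcases eq_or_ne k 0 with h0 | h0
  · simp only [h0, Int.cast_zero, mul_zero] at hk
    have : t = d := by linarith
    rw [this]
  · have hk1 : (1 : ℝ) ≤ |(k : ℝ)| := by
      exact_mod_cast Int.one_le_abs h0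
    have habs : |2 * π * (k : ℝ)| - |t| ≤ |d| := by
      have h1 : |d| = |2 * π * (k : ℝ) - t| := by
        rw [show d = t - 2 * π * (k : ℝ) from by linarith, abs_sub_comm]
      rw [h1]
      exact abs_sub_abs_le_abs_sub _ _
    have h2 : 2 * π ≤ |2 * π * (k : ℝ)| := by
      rw [abs_mul, abs_of_pos (by positivity : (0:ℝ) < 2 * π)]
      nlinarith [pi_pos]
    have h3 : |t| ≤ π := Real.Angle.abs_toReal_le_pi _
    linarith

lemma sep_lemma (δ : ℝ) (hδ : 0 ≤ δ) :
    ∀ (n : ℕ) (S : Finset ℝ) (hS : S.Nonempty), S.card = n + 1 →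
      (∀ x ∈ S, ∀ y ∈ S, x ≠ y → δ ≤ |x - y|) →
      S.min' hS + n * δ ≤ S.max' hS := by
  intro n
  induction n with
  | zero =>
    intro S hS hc _
    obtain ⟨a, rfl⟩ := Finset.card_eq_one.mp hc
    simp
  | succ n ih =>
    intro S hS hc hsep
    have hM : S.max' hS ∈ S := S.max'_mem hS
    set S' := S.erase (S.max' hS) with hS'def
    have hc' : S'.card = n + 1 := by
      rw [hS'def, Finset.card_erase_of_mem hM, hc]
      omega
    have hS' : S'.Nonempty := Finset.card_pos.mp (by omega)
    have hsub : S' ⊆ S := Finset.erase_subset _ _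
    have h1 : S'.max' hS' + δ ≤ S.max' hS := by
      have hmem := S'.max'_mem hS'
      have hne : S'.max' hS' ≠ S.max' hS := Finset.ne_of_mem_erase hmem
      have hle : S'.max' hS' ≤ S.max' hS := S.le_max' _ (hsub hmem)
      have h := hsep _ (hsub hmem) _ hM hne
      rw [abs_sub_comm, abs_of_nonneg (by linarith)] at h
      linarith
    have h2 := ih S' hS' hc' (fun x hx y hy hxy => hsep x (hsub hx) y (hsub hy) hxy)
    have h3 : S.min' hS ≤ S'.min' hS' := S.min'_le _ (hsub (S'.min'_mem hS'))
    push_cast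
    push_cast at h2
    linarith

lemma angle_gt_pi_div_three {V : Type*} [NormedAddCommGroup V] [InnerProductSpace ℝ V]
    {x y : V} (hx : ‖x‖ < ‖x - y‖) (hy : ‖y‖ < ‖x - y‖)
    (hx0 : 0 < ‖x‖) (hy0 : 0 < ‖y‖) :
    π / 3 < InnerProductGeometry.angle x y := by
  by_contra h
  push_neg at h
  have hcos := InnerProductGeometry.norm_sub_sq_eq_norm_sq_add_norm_sq_sub_two_mul_norm_mul_norm_mul_cos_angle x y
  have hge : Real.cos (π / 3) ≤ Real.cos (InnerProductGeometry.angle x y) :=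
    Real.cos_le_cos_of_nonneg_of_le_pi (InnerProductGeometry.angle_nonneg x y)
      (by linarith [Real.pi_pos]) h
  rw [Real.cos_pi_div_three] at hge
  nlinarith [mul_pos (sub_pos.2 hx) (sub_pos.2 hy), mul_pos hx0 (sub_pos.2 hx),
    mul_pos hy0 (sub_pos.2 hy), mul_pos hx0 hy0]

/-- In a planar point set `P` with pairwise distinct distances, at most `5` points of
`P \ {p}` have `p` as their nearest neighbor. -/
theorem nearest_neighbor_at_most_five (P : Finset (EuclideanSpace ℝ (Fin 2)))
    (hd : DistinctDistances P) (p : EuclideanSpace ℝ (Fin 2)) (hp : p ∈ P) :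
    ({v | v ∈ P ∧ v ≠ p ∧ IsNearest P v p} : Set (EuclideanSpace ℝ (Fin 2))).ncard ≤ 5 := by

  haveI : Fact (Module.finrank ℝ (EuclideanSpace ℝ (Fin 2)) = 2) :=
    ⟨finrank_euclideanSpace_fin⟩
  set o : Orientation ℝ (EuclideanSpace ℝ (Fin 2)) (Fin 2) := (EuclideanSpace.basisFun (Fin 2) ℝ).toBasis.orientation
  set F : Finset (EuclideanSpace ℝ (Fin 2)) := P.filter (fun v => v ≠ p ∧ IsNearest P v p) with hF
  have hset : ({v | v ∈ P ∧ v ≠ p ∧ IsNearest P v p} : Set (EuclideanSpace ℝ (Fin 2))) = ↑F := by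
    ext v; simp [hF, and_assoc]
  rw [hset, Set.ncard_coe_finset]
  by_contra hcard
  push_neg at hcard
  -- basic facts about members of F
  have hmem : ∀ v ∈ F, v ∈ P ∧ v ≠ p ∧ IsNearest P v p := by
    intro v hv; simpa [hF] using (Finset.mem_filter.mp hv)
  set e : EuclideanSpace ℝ (Fin 2) := (EuclideanSpace.basisFun (Fin 2) ℝ).toBasis 0 with he
  have he0 : e ≠ 0 := Module.Basis.ne_zero _ 0
  set θ : EuclideanSpace ℝ (Fin 2) → ℝ := fun v => (o.oangle e (v - p)).toReal with hθ
  have hsub0 : ∀ v ∈ F, v - p ≠ 0 := fun v hv =>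
    sub_ne_zero.2 (hmem v hv).2.1
  -- the unoriented angle in terms of θ
  have hangeq : ∀ u ∈ F, ∀ v ∈ F,
      InnerProductGeometry.angle (u - p) (v - p)
        = |(((θ v - θ u : ℝ) : Real.Angle)).toReal| := by
    intro u hu v hv
    have hu0 := hsub0 u hu
    have hv0 := hsub0 v hv
    rw [o.angle_eq_abs_oangle_toReal hu0 hv0]
    congr 2
    have hadd := o.oangle_add he0 hu0 hv0
    have : o.oangle (u - p) (v - p) = o.oangle e (v - p) - o.oangle e (u - p) := by
      rw [← hadd]; abel
    rw [this, hθ]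
    simp only []
    rw [Real.Angle.coe_sub, Real.Angle.coe_toReal, Real.Angle.coe_toReal]
  -- pairwise angles are big
  have hbig : ∀ u ∈ F, ∀ v ∈ F, u ≠ v →
      π / 3 < InnerProductGeometry.angle (u - p) (v - p) := by
    intro u hu v hv huv
    obtain ⟨huP, hup, hpP, hpu, hnu⟩ := hmem u hu
    obtain ⟨hvP, hvp, _, _, hnv⟩ := hmem v hv
    have h1 : dist u p < dist u v := hnu v hvP (Ne.symm huv) hvp
    have h2 : dist v p < dist v u := hnv u huP huv hup
    have hd : dist u v = ‖(u - p) - (v - p)‖ := by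
      rw [sub_sub_sub_cancel_right, dist_eq_norm]
    apply angle_gt_pi_div_three
    · rw [← hd, ← dist_eq_norm]; exact h1
    · rw [← hd, ← dist_eq_norm, dist_comm u v]; exact h2
    · rw [norm_pos_iff]; exact hsub0 u hu
    · rw [norm_pos_iff]; exact hsub0 v hv
  have hsep : ∀ u ∈ F, ∀ v ∈ F, u ≠ v → π / 3 < |θ v - θ u| := by
    intro u hu v hv huv
    calc π / 3 < InnerProductGeometry.angle (u - p) (v - p) := hbig u hu v hv huv
      _ = |(((θ v - θ u : ℝ) : Real.Angle)).toReal| := hangeq u hu v hv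
      _ ≤ |θ v - θ u| := abs_toReal_coe_le _
  have hinj : Set.InjOn θ ↑F := by
    intro u hu v hv huv
    by_contra hne
    have := hsep u hu v hv hne
    rw [huv, sub_self, abs_zero] at this
    linarith [Real.pi_pos]
  set A : Finset ℝ := F.image θ with hA
  have hAcard : A.card = F.card := Finset.card_image_of_injOn hinj
  have hA6 : 6 ≤ A.card := by omega
  have hAne : A.Nonempty := Finset.card_pos.mp (by omega)
  have hApair : ∀ x ∈ A, ∀ y ∈ A, x ≠ y → π / 3 ≤ |x - y| := by
    intro x hx y hy hxy
    obtain ⟨u, hu, rfl⟩ := Finset.mem_image.mp hx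
    obtain ⟨v, hv, rfl⟩ := Finset.mem_image.mp hy
    have huv : u ≠ v := fun h => hxy (by rw [h])
    have := hsep v hv u hu (Ne.symm huv)
    linarith
  have hsl := sep_lemma (π / 3) (by positivity) (A.card - 1) A hAne (by omega) hApair
  have hbound : ∀ x ∈ A, -π < x ∧ x ≤ π := by
    intro x hx
    obtain ⟨u, hu, rfl⟩ := Finset.mem_image.mp hx
    exact ⟨Real.Angle.neg_pi_lt_toReal _, Real.Angle.toReal_le_pi _⟩
  have hmax := hbound _ (A.max'_mem hAne)
  have hmin := hbound _ (A.min'_mem hAne)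
  have hcast : (5 : ℝ) ≤ ((A.card - 1 : ℕ) : ℝ) := by
    have : (5 : ℕ) ≤ A.card - 1 := by omega
    exact_mod_cast this
  have hD : 5 * (π / 3) ≤ A.max' hAne - A.min' hAne := by
    nlinarith [Real.pi_pos]
  obtain ⟨D, hDdef⟩ : ∃ D : ℝ, D = A.max' hAne - A.min' hAne := ⟨_, rfl⟩
  rw [← hDdef] at hD
  have hD2 : D < 2 * π := by
    rw [hDdef]; linarith [hmax.2, hmin.1]
  -- get the two extreme points
  obtain ⟨u, hu, hθu⟩ := Finset.mem_image.mp (A.min'_mem hAne)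
  obtain ⟨v, hv, hθv⟩ := Finset.mem_image.mp (A.max'_mem hAne)
  have huv : u ≠ v := by
    intro h
    rw [h, hθv] at hθu
    have : D = 0 := by rw [hDdef, hθu]; ring
    nlinarith [Real.pi_pos]
  have hang := hbig u hu v hv huv
  rw [hangeq u hu v hv, hθu, hθv, ← hDdef] at hang
  have hcoeD : ((D : ℝ) : Real.Angle) = ((D - 2 * π : ℝ) : Real.Angle) := by
    rw [Real.Angle.coe_sub, Real.Angle.coe_two_pi, sub_zero]
  have htR : (((D : ℝ) : Real.Angle)).toReal = D - 2 * π := by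
    rw [hcoeD]
    rw [Real.Angle.toReal_coe_eq_self_iff]
    constructor
    · nlinarith [Real.pi_pos]
    · nlinarith [Real.pi_pos]
  rw [htR] at hang
  rw [abs_of_nonpos (by nlinarith [Real.pi_pos])] at hang
  nlinarith [Real.pi_pos]
end
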